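/- arXiv:2504.02501 — 4 statements merged into one kernel-verified Lean document; each statement's English description precedes it below -/
import Mathlib

section
/- Let Q be a ℂ[[s]]-submodule of ℂ[∂_s] under the star operation. If Q is finitely generated over ℂ[[s]], say by q_1,...,q_m, then Q^⊥ = { p ∈ ℂ[[s]] | p ⋆ q_j = 0 for all j } is an Artinian ideal of ℂ[[s]] generated by finitely many polynomials; moreover Q^⊥ contains every monomial s^α with |α| > max_j deg(q_j). -/
noncomputable section
open MvPolynomial

/-- multi-factorial α! = ∏ αᵢ! -/
def mfact {σ : Type*} [Fintype σ] (α : σ →₀ ℕ) : ℕ := ∏ i, (α i).factorial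

/-- the pairing (q,p) = (q(∂ₛ) • p)|₍ₛ₌₀₎ = ∑_α q_α · α! · p_α -/
def pairing {h : ℕ} (q : MvPolynomial (Fin h) ℂ) (p : MvPowerSeries (Fin h) ℂ) : ℂ :=
  ∑ α ∈ q.support, q.coeff α * (mfact α : ℂ) * MvPowerSeries.coeff α p

/-- the star operation m ⋆ q = ∑_α m_α ∑_β q_β (β!/(β-α)!) ∂^(β-α) -/
def starOp {h : ℕ} (m : MvPowerSeries (Fin h) ℂ) (q : MvPolynomial (Fin h) ℂ) :
    MvPolynomial (Fin h) ℂ :=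
  ∑ β ∈ q.support, ∑ α ∈ Finset.Iic β,
    MvPolynomial.monomial (β - α)
      (q.coeff β * MvPowerSeries.coeff α m * ((mfact β : ℂ) / (mfact (β - α) : ℂ)))

/-- P^⊥ for a set of power series -/
def perpOfPS {h : ℕ} (P : Set (MvPowerSeries (Fin h) ℂ)) : Set (MvPolynomial (Fin h) ℂ) :=
  {q | ∀ p ∈ P, pairing q p = 0}

/-- Q^⊥ for a set of polynomials -/
def perpOfPoly {h : ℕ} (Q : Set (MvPolynomial (Fin h) ℂ)) : Set (MvPowerSeries (Fin h) ℂ) :=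
  {p | ∀ q ∈ Q, pairing q p = 0}

namespace Stmt8Aux

variable {h : ℕ}

/-- degree of a multi-index -/
def dg (α : Fin h →₀ ℕ) : ℕ := ∑ i, α i

lemma mfact_ne_zero (α : Fin h →₀ ℕ) : (mfact α : ℂ) ≠ 0 := by
  have : 0 < mfact α := Finset.prod_pos fun i _ => Nat.factorial_pos _
  exact_mod_cast this.ne'

lemma dg_mono {α β : Fin h →₀ ℕ} (hle : α ≤ β) : dg α ≤ dg β :=
  Finset.sum_le_sum fun i _ => Finsupp.le_def.mp hle i

lemma apply_le_dg (α : Fin h →₀ ℕ) (i : Fin h) : α i ≤ dg α :=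
  Finset.single_le_sum (fun j _ => Nat.zero_le _) (Finset.mem_univ i)

lemma dg_le_totalDegree {q : MvPolynomial (Fin h) ℂ} {β : Fin h →₀ ℕ}
    (hβ : β ∈ q.support) : dg β ≤ q.totalDegree := by
  have := MvPolynomial.le_totalDegree hβ
  rwa [Finsupp.sum_fintype _ _ (fun _ => rfl)] at this

lemma pairing_eq_sum {q : MvPolynomial (Fin h) ℂ} {S : Finset (Fin h →₀ ℕ)}
    (hS : q.support ⊆ S) (p : MvPowerSeries (Fin h) ℂ) :
    pairing q p = ∑ β ∈ S, q.coeff β * (mfact β : ℂ) * MvPowerSeries.coeff β p := by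
  unfold pairing
  refine Finset.sum_subset hS fun β _ hβ => ?_
  rw [MvPolynomial.notMem_support_iff.mp hβ]
  ring

lemma pairing_zero_left (p : MvPowerSeries (Fin h) ℂ) : pairing 0 p = 0 := by
  simp [pairing]

lemma pairing_add_left (q₁ q₂ : MvPolynomial (Fin h) ℂ) (p : MvPowerSeries (Fin h) ℂ) :
    pairing (q₁ + q₂) p = pairing q₁ p + pairing q₂ p := by
  rw [pairing_eq_sum (S := q₁.support ∪ q₂.support) MvPolynomial.support_add p,
    pairing_eq_sum (Finset.subset_union_left) p,
    pairing_eq_sum (Finset.subset_union_right) p, ← Finset.sum_add_distrib]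
  refine Finset.sum_congr rfl fun β _ => ?_
  rw [MvPolynomial.coeff_add]
  ring

/-- pairing as an additive hom in the first variable -/
def pairingHom (p : MvPowerSeries (Fin h) ℂ) : MvPolynomial (Fin h) ℂ →+ ℂ :=
  AddMonoidHom.mk' (fun q => pairing q p) (fun q₁ q₂ => pairing_add_left q₁ q₂ p)

lemma pairing_sum_left {ι : Type*} (s : Finset ι) (f : ι → MvPolynomial (Fin h) ℂ)
    (p : MvPowerSeries (Fin h) ℂ) :
    pairing (∑ i ∈ s, f i) p = ∑ i ∈ s, pairing (f i) p :=
  map_sum (pairingHom p) f s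

lemma pairing_monomialPS (q : MvPolynomial (Fin h) ℂ) (γ : Fin h →₀ ℕ) :
    pairing q (MvPowerSeries.monomial γ 1) = q.coeff γ * (mfact γ : ℂ) := by
  unfold pairing
  rw [Finset.sum_eq_single γ]
  · rw [MvPowerSeries.coeff_monomial_same, mul_one]
  · intro β _ hne
    rw [MvPowerSeries.coeff_monomial, if_neg hne, mul_zero]
  · intro hγ
    rw [MvPolynomial.notMem_support_iff.mp hγ]
    ring

lemma eq_of_pairing_monomialPS {u v : MvPolynomial (Fin h) ℂ}
    (H : ∀ γ, pairing u (MvPowerSeries.monomial γ 1)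
      = pairing v (MvPowerSeries.monomial γ 1)) : u = v := by
  ext γ
  have := H γ
  rw [pairing_monomialPS, pairing_monomialPS] at this
  exact mul_right_cancel₀ (mfact_ne_zero γ) this

lemma coeff_starOp (m : MvPowerSeries (Fin h) ℂ) (q : MvPolynomial (Fin h) ℂ)
    (γ : Fin h →₀ ℕ) :
    (starOp m q).coeff γ = ∑ β ∈ q.support,
      if γ ≤ β then q.coeff β * MvPowerSeries.coeff (β - γ) m * ((mfact β : ℂ) / (mfact γ : ℂ)) else 0 := by
  unfold starOp
  rw [MvPolynomial.coeff_sum]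
  refine Finset.sum_congr rfl fun β hβ => ?_
  rw [MvPolynomial.coeff_sum]
  simp only [MvPolynomial.coeff_monomial]
  by_cases hγ : γ ≤ β
  · rw [if_pos hγ, Finset.sum_eq_single (β - γ)]
    · rw [if_pos (tsub_tsub_cancel_of_le hγ), tsub_tsub_cancel_of_le hγ]
    · intro α hα hne
      rw [if_neg]
      intro heq
      exact hne (by rw [← heq, tsub_tsub_cancel_of_le (Finset.mem_Iic.mp hα)])
    · intro hmem
      exact absurd (Finset.mem_Iic.mpr tsub_le_self) hmem
  · rw [if_neg hγ]
    refine Finset.sum_eq_zero fun α _ => ?_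
    rw [if_neg]
    intro heq
    exact hγ (heq ▸ tsub_le_self)

lemma support_starOp_subset (m : MvPowerSeries (Fin h) ℂ) (q : MvPolynomial (Fin h) ℂ) :
    (starOp m q).support ⊆ q.support.biUnion Finset.Iic := by
  intro γ hγ
  rw [MvPolynomial.mem_support_iff, coeff_starOp] at hγ
  obtain ⟨β, hβ, hne⟩ := Finset.exists_ne_zero_of_sum_ne_zero hγ
  rw [Finset.mem_biUnion]
  refine ⟨β, hβ, Finset.mem_Iic.mpr ?_⟩
  by_contra hle
  rw [if_neg hle] at hne
  exact hne rfl

lemma sum_antidiagonal_eq (β : Fin h →₀ ℕ) (f : (Fin h →₀ ℕ) → (Fin h →₀ ℕ) → ℂ) :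
    ∑ x ∈ Finset.HasAntidiagonal.antidiagonal β, f x.1 x.2 = ∑ γ ∈ Finset.Iic β, f (β - γ) γ := by
  refine Finset.sum_nbij' (fun x => x.2) (fun γ => (β - γ, γ)) ?_ ?_ ?_ ?_ ?_
  · intro x hx
    rw [Finset.HasAntidiagonal.mem_antidiagonal] at hx
    exact Finset.mem_Iic.mpr (hx ▸ le_add_self)
  · intro γ hγ
    rw [Finset.HasAntidiagonal.mem_antidiagonal]
    exact tsub_add_cancel_of_le (Finset.mem_Iic.mp hγ)
  · intro x hx
    rw [Finset.HasAntidiagonal.mem_antidiagonal] at hx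
    ext <;> simp [← hx]
  · intro γ _
    rfl
  · intro x hx
    rw [Finset.HasAntidiagonal.mem_antidiagonal] at hx
    congr 1
    rw [← hx, add_tsub_cancel_right]

/-- the key adjunction: (q, m·p) = (m ⋆ q, p) -/
lemma pairing_mul (q : MvPolynomial (Fin h) ℂ) (m p : MvPowerSeries (Fin h) ℂ) :
    pairing q (m * p) = pairing (starOp m q) p := by
  rw [pairing_eq_sum (support_starOp_subset m q) p]
  simp only [coeff_starOp, Finset.sum_mul, ite_mul, zero_mul]
  rw [Finset.sum_comm]
  unfold pairing
  refine Finset.sum_congr rfl fun β hβ => ?_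
  rw [← Finset.sum_subset (Finset.subset_biUnion_of_mem Finset.Iic hβ)
    (fun γ _ hγ => by rw [if_neg (fun hle => hγ (Finset.mem_Iic.mpr hle))])]
  rw [MvPowerSeries.coeff_mul, Finset.mul_sum, sum_antidiagonal_eq β
    (fun a b => q.coeff β * (mfact β : ℂ) * (MvPowerSeries.coeff a m * MvPowerSeries.coeff b p))]
  refine Finset.sum_congr rfl fun γ hγ => ?_
  rw [if_pos (Finset.mem_Iic.mp hγ)]
  conv_rhs => rw [show (coeff β q * (MvPowerSeries.coeff (β - γ)) m * ((mfact β : ℂ) / (mfact γ : ℂ)) * (mfact γ : ℂ) * (MvPowerSeries.coeff γ) p) = coeff β q * (((mfact β : ℂ) / (mfact γ : ℂ)) * (mfact γ : ℂ)) * ((MvPowerSeries.coeff (β - γ)) m) * ((MvPowerSeries.coeff γ) p) from by ring]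
  rw [div_mul_cancel₀ _ (mfact_ne_zero γ)]
  ring

lemma pairing_starOp_comm (q : MvPolynomial (Fin h) ℂ) (m p : MvPowerSeries (Fin h) ℂ) :
    pairing (starOp m q) p = pairing (starOp p q) m := by
  rw [← pairing_mul, ← pairing_mul, mul_comm]

lemma starOp_zero_right (m : MvPowerSeries (Fin h) ℂ) : starOp m (0 : MvPolynomial (Fin h) ℂ) = 0 := by
  simp [starOp]

lemma starOp_mul (m p : MvPowerSeries (Fin h) ℂ) (q : MvPolynomial (Fin h) ℂ) :
    starOp (m * p) q = starOp p (starOp m q) := by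
  refine eq_of_pairing_monomialPS fun γ => ?_
  rw [← pairing_mul, ← pairing_mul, ← pairing_mul, mul_assoc]

lemma pairing_zero_right (q : MvPolynomial (Fin h) ℂ) : pairing q (0 : MvPowerSeries (Fin h) ℂ) = 0 := by
  unfold pairing
  refine Finset.sum_eq_zero fun β _ => ?_
  rw [map_zero, mul_zero]

lemma pairing_add_right (q : MvPolynomial (Fin h) ℂ) (p₁ p₂ : MvPowerSeries (Fin h) ℂ) :
    pairing q (p₁ + p₂) = pairing q p₁ + pairing q p₂ := by
  unfold pairing
  rw [← Finset.sum_add_distrib]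
  refine Finset.sum_congr rfl fun β _ => ?_
  rw [map_add, mul_add]

lemma starOp_zero_left (q : MvPolynomial (Fin h) ℂ) : starOp (0 : MvPowerSeries (Fin h) ℂ) q = 0 := by
  refine eq_of_pairing_monomialPS fun γ => ?_
  rw [← pairing_mul, zero_mul, pairing_zero_right, pairing_zero_left]

lemma starOp_add_left (m₁ m₂ : MvPowerSeries (Fin h) ℂ) (q : MvPolynomial (Fin h) ℂ) :
    starOp (m₁ + m₂) q = starOp m₁ q + starOp m₂ q := by
  refine eq_of_pairing_monomialPS fun γ => ?_
  rw [pairing_add_left, ← pairing_mul, ← pairing_mul, ← pairing_mul, add_mul, pairing_add_right]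

/-- a monomial of high degree star-kills a low degree polynomial -/
lemma starOp_monomial_eq_zero {q : MvPolynomial (Fin h) ℂ} {α : Fin h →₀ ℕ}
    (hα : q.totalDegree < dg α) :
    starOp (MvPowerSeries.monomial α 1) q = 0 := by
  unfold starOp
  refine Finset.sum_eq_zero fun β hβ => Finset.sum_eq_zero fun α' hα' => ?_
  have hne : α' ≠ α := by
    intro rfl'
    subst rfl'
    exact absurd ((dg_mono (Finset.mem_Iic.mp hα')).trans (dg_le_totalDegree hβ)) (not_le.mpr hα)
  rw [MvPowerSeries.coeff_monomial, if_neg hne, mul_zero, zero_mul, map_zero]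

/-- membership of low-order power series in the perp: p with vanishing low coefficients -/
lemma starOp_eq_zero_of_low {q : MvPolynomial (Fin h) ℂ} {p : MvPowerSeries (Fin h) ℂ} {d : ℕ}
    (hq : q.totalDegree ≤ d) (hp : ∀ β, dg β ≤ d → MvPowerSeries.coeff β p = 0) :
    starOp p q = 0 := by
  unfold starOp
  refine Finset.sum_eq_zero fun β hβ => Finset.sum_eq_zero fun α hα => ?_
  rw [hp α ((dg_mono (Finset.mem_Iic.mp hα)).trans ((dg_le_totalDegree hβ).trans hq)),
    mul_zero, zero_mul, map_zero]

lemma exists_le_dg (n : ℕ) (α : Fin h →₀ ℕ) (hn : n ≤ dg α) : ∃ μ, μ ≤ α ∧ dg μ = n := by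
  induction n with
  | zero => exact ⟨0, zero_le, by simp [dg]⟩
  | succ n ih =>
    obtain ⟨μ, hle, hdg⟩ := ih (Nat.le_of_succ_le hn)
    have hex : ∃ i, μ i < α i := by
      by_contra hc
      push_neg at hc
      have h1 : dg α ≤ dg μ := Finset.sum_le_sum fun i _ => hc i
      omega
    obtain ⟨i, hi⟩ := hex
    refine ⟨μ + Finsupp.single i 1, ?_, ?_⟩
    · rw [Finsupp.le_def]
      intro j
      rcases eq_or_ne j i with rfl | hne
      · simpa [Finsupp.single_eq_same] using hi
      · simp only [Finsupp.add_apply, Finsupp.single_eq_of_ne' (Ne.symm hne), add_zero]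
        exact Finsupp.le_def.mp hle j
    · have h2 : dg (μ + Finsupp.single i 1) = dg μ + 1 := by
        simp [dg, Finsupp.add_apply, Finset.sum_add_distrib, Finsupp.single_apply]
      omega

variable (d : ℕ)

/-- the constant multi-index with all entries `d` -/
def Dbig : Fin h →₀ ℕ := Finsupp.equivFunOnFinite.symm fun _ => d

lemma Dbig_apply (i : Fin h) : Dbig (h := h) d i = d := rfl

lemma le_Dbig_of_dg_le {α : Fin h →₀ ℕ} (hα : dg α ≤ d) : α ≤ Dbig d :=
  Finsupp.le_def.mpr fun i => (apply_le_dg α i).trans hα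

/-- the finset of multi-indices of degree exactly d+1 -/
def Sfin : Finset (Fin h →₀ ℕ) :=
  (Finset.Iic (Dbig (h := h) (d+1))).filter fun μ => dg μ = d + 1

lemma mem_Sfin {μ : Fin h →₀ ℕ} : μ ∈ Sfin (h := h) d ↔ dg μ = d + 1 := by
  unfold Sfin
  rw [Finset.mem_filter, Finset.mem_Iic]
  exact ⟨fun h' => h'.2, fun h' => ⟨le_Dbig_of_dg_le _ h'.le, h'⟩⟩

/-- a power series with vanishing coefficients in degrees ≤ d is in the ideal generated by
the monomials of degree d+1 -/
lemma low_mem_span (p : MvPowerSeries (Fin h) ℂ)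
    (hp : ∀ β, dg β ≤ d → MvPowerSeries.coeff β p = 0) :
    p ∈ Ideal.span ((fun μ => (MvPowerSeries.monomial μ (1:ℂ))) '' ↑(Sfin (h := h) d)) := by
  classical
  have pickh : ∀ α : Fin h →₀ ℕ, d + 1 ≤ dg α → ∃ μ, μ ≤ α ∧ dg μ = d + 1 :=
    fun α hα => exists_le_dg (d+1) α hα
  set pick : (Fin h →₀ ℕ) → (Fin h →₀ ℕ) :=
    fun α => if hα : d + 1 ≤ dg α then (pickh α hα).choose else 0 with hpick
  have pick_le : ∀ α (hα : d+1 ≤ dg α), pick α ≤ α := fun α hα => by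
    rw [hpick]; simp only [dif_pos hα]; exact (pickh α hα).choose_spec.1
  have pick_dg : ∀ α (hα : d+1 ≤ dg α), dg (pick α) = d+1 := fun α hα => by
    rw [hpick]; simp only [dif_pos hα]; exact (pickh α hα).choose_spec.2
  set r : (Fin h →₀ ℕ) → MvPowerSeries (Fin h) ℂ := fun μ γ =>
    if d + 1 ≤ dg (γ + μ) ∧ pick (γ + μ) = μ then MvPowerSeries.coeff (γ + μ) p else 0 with hr
  have hrc : ∀ μ γ, MvPowerSeries.coeff γ (r μ)
      = if d + 1 ≤ dg (γ + μ) ∧ pick (γ + μ) = μ then MvPowerSeries.coeff (γ + μ) p else 0 :=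
    fun μ γ => rfl
  have key : p = ∑ μ ∈ Sfin (h := h) d, MvPowerSeries.monomial μ 1 * r μ := by
    ext α
    rw [map_sum]
    simp only [MvPowerSeries.coeff_monomial_mul, one_mul]
    by_cases hα : d + 1 ≤ dg α
    · have hps := pick_le α hα
      have hadd : (α - pick α) + pick α = α := tsub_add_cancel_of_le hps
      rw [Finset.sum_eq_single (pick α)]
      · rw [if_pos hps, hrc, hadd, if_pos ⟨hα, rfl⟩]
      · intro μ hμ hne
        by_cases hle : μ ≤ α
        · rw [if_pos hle, hrc, tsub_add_cancel_of_le hle, if_neg]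
          rintro ⟨-, habs⟩
          exact hne habs.symm
        · rw [if_neg hle]
      · intro habs
        exact absurd ((mem_Sfin d).mpr (pick_dg α hα)) habs
    · rw [Finset.sum_eq_zero, hp α (by omega)]
      intro μ hμ
      rw [if_neg]
      intro hle
      have := dg_mono hle
      rw [(mem_Sfin d).mp hμ] at this
      omega
  rw [key]
  exact Ideal.sum_mem _ fun μ hμ =>
    Ideal.mul_mem_right _ _ (Ideal.subset_span ⟨μ, by simpa using hμ, rfl⟩)

section Main

variable {m : ℕ} (qs : Fin m → MvPolynomial (Fin h) ℂ)

lemma part1 :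
    perpOfPoly {q | ∃ a : Fin m → MvPowerSeries (Fin h) ℂ, q = ∑ j, starOp (a j) (qs j)}
      = {p | ∀ j, starOp p (qs j) = 0} := by
  ext p
  constructor
  · intro hp j
    refine eq_of_pairing_monomialPS fun γ => ?_
    rw [pairing_zero_left, pairing_starOp_comm]
    refine hp _ ⟨Pi.single j (MvPowerSeries.monomial γ 1), ?_⟩
    rw [Finset.sum_eq_single j]
    · rw [Pi.single_eq_same]
    · intro j' _ hne
      rw [Pi.single_eq_of_ne hne, starOp_zero_left]
    · intro habs
      exact absurd (Finset.mem_univ j) habs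
  · rintro hp q ⟨a, rfl⟩
    rw [pairing_sum_left]
    refine Finset.sum_eq_zero fun j _ => ?_
    rw [pairing_starOp_comm, hp j, pairing_zero_left]

/-- the perp as an ideal -/
def Iperp : Ideal (MvPowerSeries (Fin h) ℂ) where
  carrier := {p | ∀ j, starOp p (qs j) = 0}
  zero_mem' := fun j => starOp_zero_left _
  add_mem' := fun {p₁ p₂} h1 h2 j => by
    rw [starOp_add_left, h1 j, h2 j, add_zero]
  smul_mem' := fun c p hp j => by
    rw [smul_eq_mul, mul_comm, starOp_mul, hp j, starOp_zero_right]

lemma mem_Iperp (p : MvPowerSeries (Fin h) ℂ) : p ∈ Iperp qs ↔ ∀ j, starOp p (qs j) = 0 :=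
  Iff.rfl

/-- coercion of polynomials into power series as a ℂ-linear map -/
def coeL : MvPolynomial (Fin h) ℂ →ₗ[ℂ] MvPowerSeries (Fin h) ℂ where
  toFun q := ↑q
  map_add' a b := by push_cast; ring
  map_smul' c q := MvPowerSeries.ext fun β => by
    rw [RingHom.id_apply, map_smul, MvPolynomial.coeff_coe, MvPolynomial.coeff_smul,
      MvPolynomial.coeff_coe]

lemma coeL_apply (q : MvPolynomial (Fin h) ℂ) : coeL q = (q : MvPowerSeries (Fin h) ℂ) := rfl

variable (d : ℕ)

/-- truncation of a power series to degrees bounded by Dbig d -/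
def truncP (p : MvPowerSeries (Fin h) ℂ) : MvPolynomial (Fin h) ℂ :=
  ∑ β ∈ Finset.Iic (Dbig (h := h) d), MvPolynomial.monomial β (MvPowerSeries.coeff β p)

lemma coeff_truncP (p : MvPowerSeries (Fin h) ℂ) (β : Fin h →₀ ℕ) :
    (truncP d p).coeff β = if β ≤ Dbig (h := h) d then MvPowerSeries.coeff β p else 0 := by
  unfold truncP
  rw [MvPolynomial.coeff_sum]
  simp only [MvPolynomial.coeff_monomial]
  rw [Finset.sum_ite_eq']
  simp only [Finset.mem_Iic]

lemma tail_low (p : MvPowerSeries (Fin h) ℂ) :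
    ∀ β, dg β ≤ d → MvPowerSeries.coeff β (p - ((truncP d p : MvPolynomial (Fin h) ℂ) : MvPowerSeries (Fin h) ℂ)) = 0 := by
  intro β hβ
  rw [map_sub, MvPolynomial.coeff_coe, coeff_truncP, if_pos (le_Dbig_of_dg_le d hβ), sub_self]

lemma supp_truncP (p : MvPowerSeries (Fin h) ℂ) :
    (truncP d p).support ⊆ Finset.Iic (Dbig (h := h) d) := by
  intro β hβ
  rw [MvPolynomial.mem_support_iff, coeff_truncP] at hβ
  rw [Finset.mem_Iic]
  by_contra hc
  rw [if_neg hc] at hβ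
  exact hβ rfl

lemma coe_truncP (p : MvPowerSeries (Fin h) ℂ) :
    (↑(truncP d p) : MvPowerSeries (Fin h) ℂ)
      = ∑ β ∈ Finset.Iic (Dbig (h := h) d),
          MvPowerSeries.coeff β p • MvPowerSeries.monomial β 1 := by
  ext β'
  rw [MvPolynomial.coeff_coe, coeff_truncP, map_sum]
  simp only [LinearMap.map_smul, MvPowerSeries.coeff_monomial, smul_eq_mul, mul_ite, mul_one,
    mul_zero]
  rw [Finset.sum_ite_eq]
  simp only [Finset.mem_Iic]

lemma range_finset_aux {α : Type*} (t : Finset α) :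
    Set.range (fun i => ((t.equivFin.symm i : α))) = ↑t := by
  ext x
  constructor
  · rintro ⟨i, rfl⟩
    exact (t.equivFin.symm i).2
  · intro hx
    exact ⟨t.equivFin ⟨x, hx⟩, by simp⟩

lemma range_append {α : Type*} {a b : ℕ} (f : Fin a → α) (g : Fin b → α) :
    Set.range (Fin.append f g) = Set.range f ∪ Set.range g := by
  ext x
  constructor
  · rintro ⟨i, rfl⟩
    refine Fin.addCases (motive := fun i => Fin.append f g i ∈ Set.range f ∪ Set.range g)
      (fun i => ?_) (fun i => ?_) i
    · exact Or.inl ⟨i, (Fin.append_left f g i).symm⟩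
    · exact Or.inr ⟨i, (Fin.append_right f g i).symm⟩
  · rintro (⟨i, rfl⟩ | ⟨i, rfl⟩)
    exacts [⟨Fin.castAdd _ i, Fin.append_left f g i⟩, ⟨Fin.natAdd _ i, Fin.append_right f g i⟩]

end Main

end Stmt8Aux

open Stmt8Aux in
/-- if Q is the ℂ[[s]]-module generated (under star) by q₁,…,q_m, then
Q^⊥ = { p | p ⋆ q_j = 0 ∀ j }, Q^⊥ contains every monomial s^α with |α| > max deg q_j,
and Q^⊥ is an Artinian ideal generated by finitely many polynomials. -/
theorem stmt8 (h m : ℕ) (qs : Fin m → MvPolynomial (Fin h) ℂ)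
    (Q : Set (MvPolynomial (Fin h) ℂ))
    (hQ : Q = {q | ∃ a : Fin m → MvPowerSeries (Fin h) ℂ, q = ∑ j, starOp (a j) (qs j)}) :
    perpOfPoly Q = {p : MvPowerSeries (Fin h) ℂ | ∀ j, starOp p (qs j) = 0} ∧
    (∀ α : Fin h →₀ ℕ, (∑ i, α i) > Finset.univ.sup (fun j => (qs j).totalDegree) →
      MvPowerSeries.monomial α (1 : ℂ) ∈ perpOfPoly Q) ∧
    (∃ I : Ideal (MvPowerSeries (Fin h) ℂ),
      (I : Set (MvPowerSeries (Fin h) ℂ)) = perpOfPoly Q ∧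
      (∃ (k : ℕ) (g : Fin k → MvPolynomial (Fin h) ℂ),
        I = Ideal.span (Set.range fun i => ((g i : MvPowerSeries (Fin h) ℂ)))) ∧
      IsArtinianRing (MvPowerSeries (Fin h) ℂ ⧸ I)) := by
  classical
  subst hQ
  have hpart1 := part1 qs
  set d : ℕ := Finset.univ.sup (fun j => (qs j).totalDegree) with hd
  have hdeg : ∀ j, (qs j).totalDegree ≤ d :=
    fun j => Finset.le_sup (f := fun j => (qs j).totalDegree) (Finset.mem_univ j)
  have hJI : ∀ p : MvPowerSeries (Fin h) ℂ,
      (∀ β, dg β ≤ d → MvPowerSeries.coeff β p = 0) → p ∈ Iperp qs :=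
    fun p hp j => starOp_eq_zero_of_low (hdeg j) hp
  have hmono : ∀ α : Fin h →₀ ℕ, d < dg α → (MvPowerSeries.monomial α 1) ∈ Iperp qs :=
    fun α hα j => starOp_monomial_eq_zero (lt_of_le_of_lt (hdeg j) hα)
  refine ⟨hpart1, ?_, ?_⟩
  · intro α hα
    rw [hpart1]
    exact hmono α hα
  · set W : Submodule ℂ (MvPolynomial (Fin h) ℂ) :=
      Submodule.span ℂ ((fun β => (MvPolynomial.monomial β (1:ℂ))) '' ↑(Finset.Iic (Dbig (h := h) d))) with hW
    haveI hWfin : FiniteDimensional ℂ W :=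
      FiniteDimensional.span_of_finite ℂ (Set.Finite.image _ (Finset.finite_toSet _))
    set V : Submodule ℂ (MvPolynomial (Fin h) ℂ) :=
      W ⊓ Submodule.comap coeL ((Iperp qs).restrictScalars ℂ) with hV
    haveI hVfin : FiniteDimensional ℂ V := Submodule.finiteDimensional_of_le inf_le_left
    obtain ⟨s, hs⟩ : V.FG := V.fg_iff_finiteDimensional.mpr hVfin
    set g1 : Fin s.card → MvPolynomial (Fin h) ℂ :=
      fun i => (s.equivFin.symm i : MvPolynomial (Fin h) ℂ) with hg1
    set g2 : Fin (Sfin (h := h) d).card → MvPolynomial (Fin h) ℂ :=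
      fun i => MvPolynomial.monomial ((Sfin (h := h) d).equivFin.symm i : (Fin h →₀ ℕ)) 1 with hg2
    set g : Fin (s.card + (Sfin (h := h) d).card) → MvPolynomial (Fin h) ℂ := Fin.append g1 g2 with hg
    have hrange : (Set.range fun i => ((g i : MvPolynomial (Fin h) ℂ) : MvPowerSeries (Fin h) ℂ))
        = ((fun q : MvPolynomial (Fin h) ℂ => (q : MvPowerSeries (Fin h) ℂ)) '' ↑s)
          ∪ ((fun μ => MvPowerSeries.monomial μ (1:ℂ)) '' ↑(Sfin (h := h) d)) := by
      have he : (fun i => ((g i : MvPolynomial (Fin h) ℂ) : MvPowerSeries (Fin h) ℂ))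
          = (fun q : MvPolynomial (Fin h) ℂ => (q : MvPowerSeries (Fin h) ℂ)) ∘ g := rfl
      rw [he, Set.range_comp, hg, range_append, Set.image_union]
      congr 1
      · rw [show Set.range g1 = (↑s : Set (MvPolynomial (Fin h) ℂ)) from range_finset_aux s]
      · have hr2 : Set.range g2
            = (fun μ => (MvPolynomial.monomial μ (1:ℂ) : MvPolynomial (Fin h) ℂ)) '' ↑(Sfin (h := h) d) := by
          have : g2 = (fun μ => (MvPolynomial.monomial μ (1:ℂ) : MvPolynomial (Fin h) ℂ))
              ∘ (fun i => ((Sfin (h := h) d).equivFin.symm i : (Fin h →₀ ℕ))) := rfl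
          rw [this, Set.range_comp, range_finset_aux]
        rw [hr2, ← Set.image_comp]
        refine Set.image_congr fun μ _ => ?_
        exact MvPolynomial.coe_monomial μ (1:ℂ)
    have hspan : Iperp qs = Ideal.span (Set.range fun i => ((g i : MvPolynomial (Fin h) ℂ) : MvPowerSeries (Fin h) ℂ)) := by
      apply le_antisymm
      · intro p hp
        have htail : p - ((truncP d p : MvPolynomial (Fin h) ℂ) : MvPowerSeries (Fin h) ℂ) ∈ Iperp qs :=
          hJI _ (tail_low d p)
        have htailspan : p - ((truncP d p : MvPolynomial (Fin h) ℂ) : MvPowerSeries (Fin h) ℂ)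
            ∈ Ideal.span (Set.range fun i => ((g i : MvPolynomial (Fin h) ℂ) : MvPowerSeries (Fin h) ℂ)) := by
          refine Ideal.span_mono ?_ (low_mem_span d _ (tail_low d p))
          rw [hrange]
          exact Set.subset_union_right
        have htV : truncP d p ∈ V := by
          refine Submodule.mem_inf.mpr ⟨?_, ?_⟩
          · rw [hW]
            rw [show truncP d p = ∑ β ∈ (truncP d p).support, MvPolynomial.monomial β ((truncP d p).coeff β) from
              (MvPolynomial.support_sum_monomial_coeff (truncP d p)).symm]
            refine Submodule.sum_mem _ fun β hβ => ?_
            rw [show (MvPolynomial.monomial β ((truncP d p).coeff β) : MvPolynomial (Fin h) ℂ)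
                = ((truncP d p).coeff β) • MvPolynomial.monomial β 1 from by
              rw [MvPolynomial.smul_monomial, smul_eq_mul, mul_one]]
            exact Submodule.smul_mem _ _ (Submodule.subset_span ⟨β, supp_truncP d p hβ, rfl⟩)
          · show ((truncP d p : MvPolynomial (Fin h) ℂ) : MvPowerSeries (Fin h) ℂ) ∈ Iperp qs
            rw [show ((truncP d p : MvPolynomial (Fin h) ℂ) : MvPowerSeries (Fin h) ℂ)
                = p - (p - ((truncP d p : MvPolynomial (Fin h) ℂ) : MvPowerSeries (Fin h) ℂ)) from by ring]
            exact sub_mem hp htail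
        have htVs : truncP d p ∈ Submodule.span ℂ (↑s : Set (MvPolynomial (Fin h) ℂ)) := hs ▸ htV
        have hle : Submodule.span ℂ (↑s : Set (MvPolynomial (Fin h) ℂ))
            ≤ Submodule.comap coeL ((Ideal.span (Set.range fun i => ((g i : MvPolynomial (Fin h) ℂ) : MvPowerSeries (Fin h) ℂ))).restrictScalars ℂ) := by
          rw [Submodule.span_le]
          intro x hx
          exact Ideal.subset_span (hrange ▸ Or.inl ⟨x, hx, rfl⟩)
        have hcoe := hle htVs
        rw [show p = ((truncP d p : MvPolynomial (Fin h) ℂ) : MvPowerSeries (Fin h) ℂ)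
            + (p - ((truncP d p : MvPolynomial (Fin h) ℂ) : MvPowerSeries (Fin h) ℂ)) from by ring]
        exact add_mem hcoe htailspan
      · rw [Ideal.span_le, hrange]
        rintro x (⟨q, hq, rfl⟩ | ⟨μ, hμ, rfl⟩)
        · have hqV : q ∈ V := hs ▸ Submodule.subset_span hq
          exact (Submodule.mem_inf.mp hqV).2
        · exact hmono μ (by
            have := (mem_Sfin d).mp (Finset.mem_coe.mp hμ)
            omega)
    haveI hfin : Module.Finite ℂ (MvPowerSeries (Fin h) ℂ ⧸ Iperp qs) := by
      refine ⟨⟨(Finset.Iic (Dbig (h := h) d)).image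
        (fun β => Ideal.Quotient.mk (Iperp qs) (MvPowerSeries.monomial β 1)), ?_⟩⟩
      rw [eq_top_iff]
      rintro x -
      obtain ⟨p, rfl⟩ := Ideal.Quotient.mk_surjective x
      have h1 : Ideal.Quotient.mk (Iperp qs) p
          = Ideal.Quotient.mk (Iperp qs) ((truncP d p : MvPolynomial (Fin h) ℂ) : MvPowerSeries (Fin h) ℂ) :=
        (Ideal.Quotient.mk_eq_mk_iff_sub_mem _ _).mpr (hJI _ (tail_low d p))
      rw [h1, coe_truncP d p, map_sum]
      refine Submodule.sum_mem _ fun β hβ => ?_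
      rw [show Ideal.Quotient.mk (Iperp qs) (MvPowerSeries.coeff β p • MvPowerSeries.monomial β 1)
          = MvPowerSeries.coeff β p • Ideal.Quotient.mk (Iperp qs) (MvPowerSeries.monomial β 1) from by
        rw [← Ideal.Quotient.mkₐ_eq_mk ℂ, map_smul]]
      exact Submodule.smul_mem _ _
        (Submodule.subset_span (Finset.mem_coe.mpr (Finset.mem_image_of_mem _ hβ)))
    refine ⟨Iperp qs, ?_, ⟨s.card + (Sfin (h := h) d).card, g, hspan⟩, ?_⟩
    · rw [hpart1]
      rfl
    · exact IsArtinianRing.of_finite ℂ (MvPowerSeries (Fin h) ℂ ⧸ Iperp qs)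
end
end

section
/- Let P be a homogeneous ideal of ℂ[[s_1,...,s_h]] and m ∈ ℂ[[s]] a homogeneous element. Then (m ⋆ P^⊥)^⊥ = P : m (the colon ideal), and m ⋆ P^⊥ = (P : m)^⊥. -/
noncomputable section
open MvPolynomial

namespace S11
variable {h : ℕ}

def wt (α : Fin h →₀ ℕ) : ℕ := ∑ i, α i

lemma degree_eq_wt (α : Fin h →₀ ℕ) : α.degree = wt α :=
  Finset.sum_subset (Finset.subset_univ _)
    (fun x _ hx => Finsupp.notMem_support_iff.mp hx)

lemma wt_add (u v : Fin h →₀ ℕ) : wt (u + v) = wt u + wt v := by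
  simp [wt, Finset.sum_add_distrib]

lemma mfact_pos (α : Fin h →₀ ℕ) : 0 < mfact α :=
  Finset.prod_pos fun i _ => Nat.factorial_pos _

lemma mfact_ne_zero (α : Fin h →₀ ℕ) : (mfact α : ℂ) ≠ 0 := by
  exact_mod_cast Nat.cast_ne_zero.mpr (mfact_pos α).ne'

lemma pairing_eq_sum {q : MvPolynomial (Fin h) ℂ} {S : Finset (Fin h →₀ ℕ)}
    (hS : q.support ⊆ S) (p : MvPowerSeries (Fin h) ℂ) :
    pairing q p = ∑ α ∈ S, q.coeff α * (mfact α : ℂ) * MvPowerSeries.coeff α p :=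
  Finset.sum_subset hS (fun x _ hx => by
    simp [MvPolynomial.notMem_support_iff.mp hx])

/-- pairing as a linear map in the polynomial argument -/
def pairingL (p : MvPowerSeries (Fin h) ℂ) : MvPolynomial (Fin h) ℂ →ₗ[ℂ] ℂ where
  toFun q := pairing q p
  map_add' a b := by
    classical
    show pairing (a+b) p = pairing a p + pairing b p
    rw [pairing_eq_sum (S := a.support ∪ b.support ∪ (a+b).support)
      (Finset.subset_union_right) p,
      pairing_eq_sum (S := a.support ∪ b.support ∪ (a+b).support)
      (le_trans Finset.subset_union_left Finset.subset_union_left) p,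
      pairing_eq_sum (S := a.support ∪ b.support ∪ (a+b).support)
      (le_trans Finset.subset_union_right Finset.subset_union_left) p,
      ← Finset.sum_add_distrib]
    exact Finset.sum_congr rfl fun α _ => by rw [MvPolynomial.coeff_add]; ring
  map_smul' c a := by
    show pairing (c • a) p = c • pairing a p
    rw [smul_eq_mul, pairing_eq_sum (S := a.support) (MvPolynomial.support_smul) p,
      pairing_eq_sum (S := a.support) subset_rfl p, Finset.mul_sum]
    exact Finset.sum_congr rfl fun α _ => by
      rw [MvPolynomial.coeff_smul]; simp; ring

lemma pairing_add_left (a b : MvPolynomial (Fin h) ℂ) (p : MvPowerSeries (Fin h) ℂ) :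
    pairing (a + b) p = pairing a p + pairing b p := (pairingL p).map_add a b

lemma pairing_sum_left {ι : Type*} (s : Finset ι) (f : ι → MvPolynomial (Fin h) ℂ)
    (p : MvPowerSeries (Fin h) ℂ) :
    pairing (∑ i ∈ s, f i) p = ∑ i ∈ s, pairing (f i) p := map_sum (pairingL p) f s

lemma pairing_monomial_left (γ : Fin h →₀ ℕ) (c : ℂ) (p : MvPowerSeries (Fin h) ℂ) :
    pairing (MvPolynomial.monomial γ c) p = c * (mfact γ : ℂ) * MvPowerSeries.coeff γ p := by
  classical
  rw [pairing_eq_sum (S := {γ}) MvPolynomial.support_monomial_subset p, Finset.sum_singleton,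
    MvPolynomial.coeff_monomial, if_pos rfl]

lemma pairing_monomialPS (q : MvPolynomial (Fin h) ℂ) (α : Fin h →₀ ℕ) :
    pairing q (MvPowerSeries.monomial α 1) = q.coeff α * (mfact α : ℂ) := by
  classical
  rw [pairing_eq_sum (S := insert α q.support) (Finset.subset_insert _ _) _]
  have : ∀ β ∈ insert α q.support,
      q.coeff β * (mfact β : ℂ) * MvPowerSeries.coeff β (MvPowerSeries.monomial α 1)
      = if β = α then q.coeff β * (mfact β : ℂ) else 0 := by
    intro β _
    rw [MvPowerSeries.coeff_monomial]
    split_ifs with h1 h2 <;> simp_all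
  rw [Finset.sum_congr rfl this, Finset.sum_ite_eq' (insert α q.support) α
    (fun β => q.coeff β * (mfact β : ℂ)), if_pos (Finset.mem_insert_self _ _)]

lemma poly_ext_of_pairing {a b : MvPolynomial (Fin h) ℂ}
    (H : ∀ p, pairing a p = pairing b p) : a = b := by
  apply MvPolynomial.ext; intro α
  have := H (MvPowerSeries.monomial α 1)
  rw [pairing_monomialPS, pairing_monomialPS] at this
  exact mul_right_cancel₀ (mfact_ne_zero α) this

lemma pairing_add_right (q : MvPolynomial (Fin h) ℂ) (p1 p2 : MvPowerSeries (Fin h) ℂ) :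
    pairing q (p1 + p2) = pairing q p1 + pairing q p2 := by
  unfold pairing
  rw [← Finset.sum_add_distrib]
  exact Finset.sum_congr rfl fun α _ => by rw [map_add]; ring

lemma pairing_smul_right (q : MvPolynomial (Fin h) ℂ) (c : ℂ) (p : MvPowerSeries (Fin h) ℂ) :
    pairing q (c • p) = c * pairing q p := by
  unfold pairing
  rw [Finset.mul_sum]
  exact Finset.sum_congr rfl fun α _ => by rw [map_smul]; simp; ring

/-- the adjointness identity: (m ⋆ q, p) = (q, m·p) -/
lemma pairing_starOp (m : MvPowerSeries (Fin h) ℂ) (q : MvPolynomial (Fin h) ℂ)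
    (p : MvPowerSeries (Fin h) ℂ) :
    pairing (starOp m q) p = pairing q (m * p) := by
  classical
  unfold starOp
  rw [pairing_sum_left, pairing_eq_sum (subset_rfl) (m * p)]
  apply Finset.sum_congr rfl
  intro β _
  rw [pairing_sum_left, MvPowerSeries.coeff_mul, Finset.mul_sum]
  apply Finset.sum_nbij' (i := fun α => ((α, β - α) : (Fin h →₀ ℕ) × (Fin h →₀ ℕ)))
    (j := fun x => x.1)
  · intro α hα
    rw [Finset.mem_Iic] at hα
    rw [Finset.HasAntidiagonal.mem_antidiagonal]
    exact add_tsub_cancel_of_le hα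
  · intro x hx
    rw [Finset.HasAntidiagonal.mem_antidiagonal] at hx
    rw [Finset.mem_Iic]
    exact le_of_add_le_left hx.le
  · intro α _; rfl
  · intro x hx
    rw [Finset.HasAntidiagonal.mem_antidiagonal] at hx
    ext
    · rfl
    · simp only
      rw [← hx, add_tsub_cancel_left]
  · intro α hα
    rw [pairing_monomial_left]
    have hc : (mfact β : ℂ) / (mfact (β - α) : ℂ) * (mfact (β - α) : ℂ) = (mfact β : ℂ) :=
      div_mul_cancel₀ _ (mfact_ne_zero _)
    linear_combination
      (coeff β q * (MvPowerSeries.coeff α) m * (MvPowerSeries.coeff (β - α)) p) * hc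

lemma starOp_add (m : MvPowerSeries (Fin h) ℂ) (a b : MvPolynomial (Fin h) ℂ) :
    starOp m (a + b) = starOp m a + starOp m b := by
  apply poly_ext_of_pairing
  intro p
  rw [pairing_starOp, pairing_add_left, pairing_add_left, pairing_starOp, pairing_starOp]

lemma starOp_smul (m : MvPowerSeries (Fin h) ℂ) (c : ℂ) (a : MvPolynomial (Fin h) ℂ) :
    starOp m (c • a) = c • starOp m a := by
  apply poly_ext_of_pairing
  intro p
  rw [pairing_starOp]
  have h1 : pairing (c • a) (m * p) = c • pairing a (m * p) := (pairingL (m*p)).map_smul c a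
  have h2 : pairing (c • starOp m a) p = c • pairing (starOp m a) p := (pairingL p).map_smul c _
  rw [h1, h2, pairing_starOp]

lemma starOp_sum {ι : Type*} (m : MvPowerSeries (Fin h) ℂ) (s : Finset ι)
    (f : ι → MvPolynomial (Fin h) ℂ) :
    starOp m (∑ i ∈ s, f i) = ∑ i ∈ s, starOp m (f i) := by
  induction s using Finset.cons_induction with
  | empty =>
    apply poly_ext_of_pairing
    intro p
    rw [Finset.sum_empty, Finset.sum_empty, pairing_starOp]
    simp [pairing]
  | cons i s his ih =>
    rw [Finset.sum_cons, Finset.sum_cons, starOp_add, ih]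

/-! ### homogeneous components of power series -/

/-- degree-k component of a power series -/
def cps (k : ℕ) (p : MvPowerSeries (Fin h) ℂ) : MvPowerSeries (Fin h) ℂ :=
  fun α => if wt α = k then MvPowerSeries.coeff α p else 0

lemma coeff_cps (k : ℕ) (p : MvPowerSeries (Fin h) ℂ) (α : Fin h →₀ ℕ) :
    MvPowerSeries.coeff α (cps k p) = if wt α = k then MvPowerSeries.coeff α p else 0 := rfl

/-- the finset of multi-indices of weight k -/
def Sk (k : ℕ) : Finset (Fin h →₀ ℕ) :=
  Finset.filter (fun α => wt α = k) (Finset.Iic (Finsupp.equivFunOnFinite.symm fun _ => k))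

lemma mem_Sk {k : ℕ} {α : Fin h →₀ ℕ} : α ∈ Sk k ↔ wt α = k := by
  constructor
  · intro hα; exact (Finset.mem_filter.mp hα).2
  · intro hα
    refine Finset.mem_filter.mpr ⟨Finset.mem_Iic.mpr ?_, hα⟩
    intro i
    simp only [Finsupp.equivFunOnFinite_symm_apply_apply]
    calc α i ≤ ∑ j, α j := Finset.single_le_sum (fun j _ => Nat.zero_le _) (Finset.mem_univ i)
    _ = k := hα

/-- degree-k component of a power series, as a polynomial -/
def pc (k : ℕ) (p : MvPowerSeries (Fin h) ℂ) : MvPolynomial (Fin h) ℂ :=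
  ∑ α ∈ Sk k, MvPolynomial.monomial α (MvPowerSeries.coeff α p)

lemma coeff_pc (k : ℕ) (p : MvPowerSeries (Fin h) ℂ) (β : Fin h →₀ ℕ) :
    MvPolynomial.coeff β (pc k p) = if wt β = k then MvPowerSeries.coeff β p else 0 := by
  classical
  unfold pc
  rw [MvPolynomial.coeff_sum]
  have : ∀ α ∈ Sk k, MvPolynomial.coeff β (MvPolynomial.monomial α (MvPowerSeries.coeff α p))
      = if α = β then MvPowerSeries.coeff α p else 0 := fun α _ => MvPolynomial.coeff_monomial _ _ _
  rw [Finset.sum_congr rfl this, Finset.sum_ite_eq' (Sk k) β (fun α => MvPowerSeries.coeff α p)]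
  by_cases hβ : wt β = k
  · rw [if_pos (mem_Sk.mpr hβ), if_pos hβ]
  · rw [if_neg (fun hc => hβ (mem_Sk.mp hc)), if_neg hβ]

lemma coe_pc (k : ℕ) (p : MvPowerSeries (Fin h) ℂ) :
    ((pc k p : MvPolynomial (Fin h) ℂ) : MvPowerSeries (Fin h) ℂ) = cps k p := by
  ext α
  rw [MvPolynomial.coeff_coe, coeff_pc, coeff_cps]

lemma pc_mem (k : ℕ) (p : MvPowerSeries (Fin h) ℂ) :
    pc k p ∈ homogeneousSubmodule (Fin h) ℂ k := by
  apply Submodule.sum_mem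
  intro α hα
  rw [mem_homogeneousSubmodule]
  exact isHomogeneous_monomial _ (by rw [degree_eq_wt]; exact mem_Sk.mp hα)

lemma coeff_eq_zero_of_homog {q : MvPolynomial (Fin h) ℂ} {k : ℕ}
    (hq : q ∈ homogeneousSubmodule (Fin h) ℂ k) {β : Fin h →₀ ℕ} (hβ : wt β ≠ k) :
    MvPolynomial.coeff β q = 0 := by
  exact MvPolynomial.IsHomogeneous.coeff_eq_zero
    (((mem_homogeneousSubmodule _ _).mp hq)) (by rw [degree_eq_wt]; exact hβ)

/-- pairing against a homogeneous component moves to a homogeneous component -/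
lemma pairing_homComp (k : ℕ) (q : MvPolynomial (Fin h) ℂ) (p : MvPowerSeries (Fin h) ℂ) :
    pairing (homogeneousComponent k q) p = pairing q (cps k p) := by
  classical
  rw [pairing_eq_sum (S := q.support ∪ (homogeneousComponent k q).support)
    Finset.subset_union_right p,
    pairing_eq_sum (S := q.support ∪ (homogeneousComponent k q).support)
    Finset.subset_union_left (cps k p)]
  apply Finset.sum_congr rfl
  intro β _
  rw [coeff_homogeneousComponent, coeff_cps, degree_eq_wt]
  split_ifs <;> ring

lemma pairing_cps_of_homog {q : MvPolynomial (Fin h) ℂ} {k : ℕ}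
    (hq : q ∈ homogeneousSubmodule (Fin h) ℂ k) (p : MvPowerSeries (Fin h) ℂ) :
    pairing q (cps k p) = pairing q p := by
  unfold pairing
  apply Finset.sum_congr rfl
  intro β hβ
  have : wt β = k := by
    by_contra hc
    exact MvPolynomial.mem_support_iff.mp hβ (coeff_eq_zero_of_homog hq hc)
  rw [coeff_cps, if_pos this]

lemma cps_of_homog {q : MvPolynomial (Fin h) ℂ} {k : ℕ}
    (hq : q ∈ homogeneousSubmodule (Fin h) ℂ k) :
    cps k (q : MvPowerSeries (Fin h) ℂ) = q := by
  ext α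
  rw [coeff_cps]
  split_ifs with hα
  · rfl
  · rw [MvPolynomial.coeff_coe]
    exact (coeff_eq_zero_of_homog hq hα).symm

section HomogMul
variable {m : MvPowerSeries (Fin h) ℂ} {d : ℕ}

/-- multiplication by a homogeneous series shifts homogeneous components -/
lemma mul_cps (hmd : ∀ α : Fin h →₀ ℕ, wt α ≠ d → MvPowerSeries.coeff α m = 0) (k : ℕ) (p : MvPowerSeries (Fin h) ℂ) :
    m * cps k p = cps (k + d) (m * p) := by
  classical
  ext γ
  rw [coeff_cps, MvPowerSeries.coeff_mul, MvPowerSeries.coeff_mul]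
  by_cases hγ : wt γ = k + d
  · rw [if_pos hγ]
    apply Finset.sum_congr rfl
    intro x hx
    rw [Finset.HasAntidiagonal.mem_antidiagonal] at hx
    by_cases hmx : MvPowerSeries.coeff x.1 m = 0
    · rw [hmx, zero_mul, zero_mul]
    · have h1 : wt x.1 = d := by by_contra hc; exact hmx (hmd _ hc)
      have h2 : wt x.2 = k := by
        have := wt_add x.1 x.2
        rw [hx, hγ, h1] at this
        omega
      rw [coeff_cps, if_pos h2]
  · rw [if_neg hγ]
    apply Finset.sum_eq_zero
    intro x hx
    rw [Finset.HasAntidiagonal.mem_antidiagonal] at hx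
    by_cases hmx : MvPowerSeries.coeff x.1 m = 0
    · rw [hmx, zero_mul]
    · have h1 : wt x.1 = d := by by_contra hc; exact hmx (hmd _ hc)
      rw [coeff_cps]
      have h2 : wt x.2 ≠ k := by
        intro hc
        apply hγ
        have := wt_add x.1 x.2
        rw [hx, h1, hc] at this
        omega
      rw [if_neg h2, mul_zero]

/-- product of homogeneous m with a homogeneous polynomial is concentrated in degree e+d -/
lemma mul_coe_homog (hmd : ∀ α : Fin h →₀ ℕ, wt α ≠ d → MvPowerSeries.coeff α m = 0)
    {q : MvPolynomial (Fin h) ℂ} {e : ℕ}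
    (hq : q ∈ homogeneousSubmodule (Fin h) ℂ e) :
    m * (q : MvPowerSeries (Fin h) ℂ) = cps (e + d) (m * (q : MvPowerSeries (Fin h) ℂ)) := by
  conv_lhs => rw [← cps_of_homog hq]
  exact mul_cps hmd e _

/-- star against homogeneous m maps degree e+d to degree e -/
lemma starOp_homog (hmd : ∀ α : Fin h →₀ ℕ, wt α ≠ d → MvPowerSeries.coeff α m = 0)
    {q : MvPolynomial (Fin h) ℂ} {e : ℕ}
    (hq : q ∈ homogeneousSubmodule (Fin h) ℂ (e + d)) :
    starOp m q ∈ homogeneousSubmodule (Fin h) ℂ e := by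
  rw [mem_homogeneousSubmodule]
  intro γ hγ
  rw [show (Finsupp.weight 1) γ = γ.degree from (DFunLike.congr_fun (Finsupp.degree_eq_weight_one (R := ℕ)) γ).symm, degree_eq_wt]
  by_contra hne
  apply hγ
  have hE : MvPolynomial.coeff γ (starOp m q) * (mfact γ : ℂ)
      = pairing q (m * MvPowerSeries.monomial γ 1) := by
    rw [← pairing_starOp, pairing_monomialPS]
  have hz : pairing q (m * MvPowerSeries.monomial γ 1) = 0 := by
    unfold pairing
    apply Finset.sum_eq_zero
    intro β hβ
    have hβw : wt β = e + d := by
      by_contra hc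
      exact MvPolynomial.mem_support_iff.mp hβ (coeff_eq_zero_of_homog hq hc)
    have : MvPowerSeries.coeff β (m * MvPowerSeries.monomial γ 1) = 0 := by
      rw [MvPowerSeries.coeff_mul]
      apply Finset.sum_eq_zero
      intro x hx
      rw [Finset.HasAntidiagonal.mem_antidiagonal] at hx
      rw [MvPowerSeries.coeff_monomial]
      by_cases hx2 : x.2 = γ
      · have hm0 : MvPowerSeries.coeff x.1 m = 0 := by
          apply hmd
          intro hc
          apply hne
          have := wt_add x.1 x.2
          rw [hx, hβw, hc, hx2] at this
          omega
        rw [hm0, zero_mul]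
      · rw [if_neg hx2, mul_zero]
    rw [this, mul_zero]
  have := hE.trans hz
  rcases mul_eq_zero.mp this with h0 | h0
  · exact h0
  · exact absurd h0 (mfact_ne_zero γ)

end HomogMul

/-- homogeneous component of a product with a homogeneous polynomial -/
lemma homComp_mul_homog {g : MvPolynomial (Fin h) ℂ} {d : ℕ}
    (hg : g ∈ homogeneousSubmodule (Fin h) ℂ d) (c : MvPolynomial (Fin h) ℂ) (n : ℕ) :
    homogeneousComponent n (c * g) =
      (if d ≤ n then homogeneousComponent (n - d) c else 0) * g := by
  classical
  apply MvPolynomial.ext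
  intro β
  rw [coeff_homogeneousComponent]
  by_cases hdn : d ≤ n
  · rw [if_pos hdn, MvPolynomial.coeff_mul, MvPolynomial.coeff_mul]
    by_cases hβ : β.degree = n
    · rw [if_pos hβ]
      apply Finset.sum_congr rfl
      intro x hx
      rw [Finset.HasAntidiagonal.mem_antidiagonal] at hx
      by_cases hgx : MvPolynomial.coeff x.2 g = 0
      · rw [hgx, mul_zero, mul_zero]
      · have h2 : wt x.2 = d := by
          by_contra hc; exact hgx (coeff_eq_zero_of_homog hg hc)
        have h1 : (x.1).degree = n - d := by
          rw [degree_eq_wt]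
          have := wt_add x.1 x.2
          rw [hx] at this
          rw [degree_eq_wt] at hβ
          omega
        rw [coeff_homogeneousComponent, if_pos h1]
    · rw [if_neg hβ]
      symm
      apply Finset.sum_eq_zero
      intro x hx
      rw [Finset.HasAntidiagonal.mem_antidiagonal] at hx
      by_cases hgx : MvPolynomial.coeff x.2 g = 0
      · rw [hgx, mul_zero]
      · have h2 : wt x.2 = d := by
          by_contra hc; exact hgx (coeff_eq_zero_of_homog hg hc)
        rw [coeff_homogeneousComponent]
        have h1 : (x.1).degree ≠ n - d := by
          rw [degree_eq_wt]
          intro hc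
          apply hβ
          rw [degree_eq_wt]
          have := wt_add x.1 x.2
          rw [hx] at this
          omega
        rw [if_neg h1, zero_mul]
  · rw [if_neg hdn, zero_mul, MvPolynomial.coeff_zero]
    by_cases hβ : β.degree = n
    · rw [if_pos hβ, MvPolynomial.coeff_mul]
      apply Finset.sum_eq_zero
      intro x hx
      rw [Finset.HasAntidiagonal.mem_antidiagonal] at hx
      by_cases hgx : MvPolynomial.coeff x.2 g = 0
      · rw [hgx, mul_zero]
      · exfalso
        have h2 : wt x.2 = d := by
          by_contra hc; exact hgx (coeff_eq_zero_of_homog hg hc)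
        have := wt_add x.1 x.2
        rw [hx] at this
        rw [degree_eq_wt] at hβ
        omega
    · rw [if_neg hβ]

section FD
variable {V W : Type*} [AddCommGroup V] [Module ℂ V] [AddCommGroup W] [Module ℂ W]
  [FiniteDimensional ℂ V] [FiniteDimensional ℂ W]

/-- in a f.d. space with a nondegenerate bilinear form, double orthogonal = self -/
lemma mem_of_perp_perp (B : LinearMap.BilinForm ℂ V) (hB : B.Nondegenerate)
    (U : Submodule ℂ V) (v : V)
    (hv : ∀ w : V, (∀ u ∈ U, B w u = 0) → B w v = 0) : v ∈ U := by
  by_contra hvU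
  have : v ∉ U.dualAnnihilator.dualCoannihilator := by
    rwa [Subspace.dualAnnihilator_dualCoannihilator_eq]
  rw [Submodule.mem_dualCoannihilator] at this
  push_neg at this
  obtain ⟨φ, hφ, hφv⟩ := this
  rw [Submodule.mem_dualAnnihilator] at hφ
  set w := (B.toDual hB).symm φ with hw
  have hBw : ∀ u : V, B w u = φ u := fun u => B.apply_toDual_symm_apply φ u
  exact hφv (by rw [← hBw]; exact hv w (fun u hu => by rw [hBw]; exact hφ u hu))

/-- surjectivity onto the annihilator of a preimage, via the adjoint -/
lemma exists_adjoint_perp (BV : LinearMap.BilinForm ℂ V) (hBV : BV.Nondegenerate)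
    (BW : LinearMap.BilinForm ℂ W) (hBW : BW.Nondegenerate)
    (f : V →ₗ[ℂ] W) (U : Submodule ℂ W) (r : V)
    (hr : ∀ v : V, f v ∈ U → BV r v = 0) :
    ∃ w : W, (∀ u ∈ U, BW w u = 0) ∧ (∀ v : V, BW w (f v) = BV r v) := by
  have hker : Submodule.comap f U = LinearMap.ker (U.mkQ.comp f) := by
    ext x
    simp [LinearMap.mem_ker, Submodule.Quotient.mk_eq_zero]
  have hφmem : BV r ∈ (Submodule.comap f U).dualAnnihilator := by
    rw [Submodule.mem_dualAnnihilator]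
    intro v hv
    exact hr v (Submodule.mem_comap.mp hv)
  rw [hker, ← LinearMap.range_dualMap_eq_dualAnnihilator_ker] at hφmem
  obtain ⟨ψ₀, hψ₀⟩ := hφmem
  rw [← LinearMap.dualMap_comp_dualMap] at hψ₀
  set ψ := U.mkQ.dualMap ψ₀ with hψ
  set w := (BW.toDual hBW).symm ψ with hw
  have hBw : ∀ u : W, BW w u = ψ u := fun u => BW.apply_toDual_symm_apply ψ u
  refine ⟨w, fun u hu => ?_, fun v => ?_⟩
  · rw [hBw]
    show ψ₀ (U.mkQ u) = 0
    rw [show U.mkQ u = 0 from (Submodule.Quotient.mk_eq_zero U).mpr hu, map_zero]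
  · rw [hBw]
    have : f.dualMap ψ v = BV r v := by rw [← hψ₀]; rfl
    rw [← this]
    rfl

end FD

/-- finite-dimensionality of the space of homogeneous polynomials -/
instance (k : ℕ) : FiniteDimensional ℂ (homogeneousSubmodule (Fin h) ℂ k) := by
  apply Submodule.finiteDimensional_of_le (S₂ := restrictTotalDegree (Fin h) ℂ k)
  intro p hp
  rw [mem_restrictTotalDegree]
  exact MvPolynomial.IsHomogeneous.totalDegree_le ((mem_homogeneousSubmodule _ _).mp hp)

/-- the big bilinear pairing between polynomials -/
def Bbig : MvPolynomial (Fin h) ℂ →ₗ[ℂ] MvPolynomial (Fin h) ℂ →ₗ[ℂ] ℂ :=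
  LinearMap.mk₂ ℂ (fun q r => pairing q (r : MvPowerSeries (Fin h) ℂ))
    (fun a b r => by
      show pairing (a + b) _ = pairing a _ + pairing b _
      rw [pairing_add_left])
    (fun c a r => by
      show pairing (c • a) _ = c • pairing a _
      exact (pairingL ((r : MvPolynomial (Fin h) ℂ) : MvPowerSeries (Fin h) ℂ)).map_smul c a)
    (fun q a b => by
      show pairing q _ = pairing q _ + pairing q _
      push_cast
      rw [pairing_add_right])
    (fun c q a => by
      show pairing q _ = c • pairing q _
      have h1 : ((c • a : MvPolynomial (Fin h) ℂ) : MvPowerSeries (Fin h) ℂ)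
          = c • (a : MvPowerSeries (Fin h) ℂ) := by
        ext β
        rw [MvPolynomial.coeff_coe]
        rw [MvPolynomial.coeff_smul]
        simp
      rw [h1, pairing_smul_right, smul_eq_mul])

lemma Bbig_apply (q r : MvPolynomial (Fin h) ℂ) :
    Bbig q r = pairing q (r : MvPowerSeries (Fin h) ℂ) := rfl

/-- the restriction of the pairing to homogeneous degree-k polynomials -/
def Bk (k : ℕ) : LinearMap.BilinForm ℂ (homogeneousSubmodule (Fin h) ℂ k) :=
  Bbig.compl₁₂ (homogeneousSubmodule (Fin h) ℂ k).subtype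
    (homogeneousSubmodule (Fin h) ℂ k).subtype

lemma Bk_apply (k : ℕ) (q r : homogeneousSubmodule (Fin h) ℂ k) :
    Bk k q r = pairing (q : MvPolynomial (Fin h) ℂ) ((r : MvPolynomial (Fin h) ℂ) :
      MvPowerSeries (Fin h) ℂ) := rfl

lemma Bk_nondegenerate (k : ℕ) : (Bk (h := h) k).Nondegenerate := by
  refine ⟨fun x hx => ?_, ?_⟩
  apply Subtype.ext
  apply MvPolynomial.ext
  intro α
  simp only [ZeroMemClass.coe_zero, MvPolynomial.coeff_zero]
  by_cases hα : wt α = k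
  · have hmono : (MvPolynomial.monomial α (1 : ℂ)) ∈ homogeneousSubmodule (Fin h) ℂ k :=
      (mem_homogeneousSubmodule _ _).mpr (isHomogeneous_monomial _ (by rw [degree_eq_wt]; exact hα))
    have := hx ⟨MvPolynomial.monomial α 1, hmono⟩
    rw [Bk_apply] at this
    have hcoe : ((MvPolynomial.monomial α (1:ℂ) : MvPolynomial (Fin h) ℂ) :
        MvPowerSeries (Fin h) ℂ) = MvPowerSeries.monomial α 1 := MvPolynomial.coe_monomial _ _
    rw [hcoe, pairing_monomialPS] at this
    rcases mul_eq_zero.mp this with h0 | h0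
    · exact h0
    · exact absurd h0 (mfact_ne_zero α)
  · exact coeff_eq_zero_of_homog x.2 hα
  intro x hx
  apply Subtype.ext
  apply MvPolynomial.ext
  intro α
  simp only [ZeroMemClass.coe_zero, MvPolynomial.coeff_zero]
  by_cases hα : wt α = k
  · have hmono : (MvPolynomial.monomial α (1 : ℂ)) ∈ homogeneousSubmodule (Fin h) ℂ k :=
      (mem_homogeneousSubmodule _ _).mpr (isHomogeneous_monomial _ (by rw [degree_eq_wt]; exact hα))
    have := hx ⟨MvPolynomial.monomial α 1, hmono⟩
    rw [Bk_apply, pairing_monomial_left, one_mul] at this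
    rcases mul_eq_zero.mp this with h0 | h0
    · exact absurd h0 (mfact_ne_zero α)
    · rw [← MvPolynomial.coeff_coe]; exact h0
  · exact coeff_eq_zero_of_homog x.2 hα

/-- if all homogeneous components of a power series lie in an ideal, so does the series -/
lemma mem_of_components (P : Ideal (MvPowerSeries (Fin h) ℂ)) (p : MvPowerSeries (Fin h) ℂ)
    (hcomp : ∀ k, cps k p ∈ P) : p ∈ P := by
  classical
  set G : Set (MvPolynomial (Fin h) ℂ) :=
    {g | ((g : MvPowerSeries (Fin h) ℂ)) ∈ P ∧ ∃ n, g ∈ homogeneousSubmodule (Fin h) ℂ n} with hG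
  have hQfg : (Ideal.span G).FG := IsNoetherian.noetherian (Ideal.span G)
  obtain ⟨T, hT⟩ := hQfg
  have hmem : ∀ t ∈ T, ∃ Ft : Finset (MvPolynomial (Fin h) ℂ),
      ↑Ft ⊆ G ∧ t ∈ Ideal.span (↑Ft : Set (MvPolynomial (Fin h) ℂ)) := by
    intro t ht
    have : t ∈ Ideal.span G := by
      rw [← hT]
      exact Ideal.subset_span ht
    exact Submodule.mem_span_finite_of_mem_span this
  choose Fs hFs1 hFs2 using hmem
  set F : Finset (MvPolynomial (Fin h) ℂ) := T.attach.biUnion (fun t => Fs t t.2) with hF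
  have hFG : (↑F : Set (MvPolynomial (Fin h) ℂ)) ⊆ G := by
    intro g hg
    rw [Finset.mem_coe, hF, Finset.mem_biUnion] at hg
    obtain ⟨t, _, hgt⟩ := hg
    exact hFs1 t t.2 hgt
  have hQF : Ideal.span G ≤ Ideal.span (↑F : Set (MvPolynomial (Fin h) ℂ)) := by
    rw [← hT, Ideal.span_le]
    intro t ht
    have hsub : (↑(Fs t ht) : Set (MvPolynomial (Fin h) ℂ)) ⊆ ↑F := by
      intro g hg
      rw [Finset.mem_coe, hF, Finset.mem_biUnion]
      exact ⟨⟨t, ht⟩, Finset.mem_attach _ _, hg⟩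
    exact Ideal.span_mono hsub (hFs2 t ht)
  have hdeg' : ∀ g : MvPolynomial (Fin h) ℂ, ∃ n, g ∈ F → g ∈ homogeneousSubmodule (Fin h) ℂ n := by
    intro g
    by_cases hg : g ∈ F
    · obtain ⟨n, hn⟩ := (hFG hg).2
      exact ⟨n, fun _ => hn⟩
    · exact ⟨0, fun hc => absurd hc hg⟩
  choose dg hdg using hdeg'
  have hpc : ∀ k, pc k p ∈ Ideal.span (↑F : Set (MvPolynomial (Fin h) ℂ)) := by
    intro k
    apply hQF
    apply Ideal.subset_span
    exact ⟨by rw [coe_pc]; exact hcomp k, ⟨k, pc_mem k p⟩⟩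
  have hco : ∀ k, ∃ c : MvPolynomial (Fin h) ℂ → MvPolynomial (Fin h) ℂ,
      ∑ g ∈ F, c g * g = pc k p := by
    intro k
    obtain ⟨c, -, hc⟩ := Submodule.mem_span_finset.mp (hpc k)
    exact ⟨c, by simpa [smul_eq_mul] using hc⟩
  choose cc hcc using hco
  set ee : ℕ → MvPolynomial (Fin h) ℂ → MvPolynomial (Fin h) ℂ :=
    fun k g => (if dg g ≤ k then homogeneousComponent (k - dg g) (cc k g) else 0) with hee
  have hk : ∀ k, ∑ g ∈ F, ee k g * g = pc k p := by
    intro k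
    have h1 : homogeneousComponent k (pc k p) = pc k p := by
      rw [homogeneousComponent_of_mem (pc_mem k p), if_pos rfl]
    calc ∑ g ∈ F, ee k g * g
        = ∑ g ∈ F, homogeneousComponent k (cc k g * g) := by
          apply Finset.sum_congr rfl
          intro g hg
          rw [homComp_mul_homog (hdg g hg) (cc k g) k]
      _ = homogeneousComponent k (∑ g ∈ F, cc k g * g) := (map_sum _ _ _).symm
      _ = pc k p := by rw [hcc k, h1]
  set CC : MvPolynomial (Fin h) ℂ → MvPowerSeries (Fin h) ℂ :=
    fun g => fun α => MvPolynomial.coeff α (ee (wt α + dg g) g) with hCC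
  have final : p = ∑ g ∈ F, CC g * (g : MvPowerSeries (Fin h) ℂ) := by
    ext α
    rw [map_sum]
    have hterm : ∀ g ∈ F, MvPowerSeries.coeff α (CC g * (g : MvPowerSeries (Fin h) ℂ))
        = MvPolynomial.coeff α (ee (wt α) g * g) := by
      intro g hg
      rw [MvPowerSeries.coeff_mul, MvPolynomial.coeff_mul]
      apply Finset.sum_congr rfl
      intro x hx
      rw [Finset.HasAntidiagonal.mem_antidiagonal] at hx
      rw [MvPolynomial.coeff_coe]
      by_cases hgx : MvPolynomial.coeff x.2 g = 0
      · rw [hgx, mul_zero, mul_zero]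
      · have h2 : wt x.2 = dg g := by
          by_contra hc; exact hgx (coeff_eq_zero_of_homog (hdg g hg) hc)
        have hix : MvPowerSeries.coeff x.1 (CC g)
            = MvPolynomial.coeff x.1 (ee (wt α) g) := by
          show MvPolynomial.coeff x.1 (ee (wt x.1 + dg g) g)
            = MvPolynomial.coeff x.1 (ee (wt α) g)
          have hwx : wt x.1 + dg g = wt α := by
            rw [← hx, wt_add, h2]
          rw [hwx]
        rw [hix]
    rw [Finset.sum_congr rfl hterm,
      show ∑ g ∈ F, MvPolynomial.coeff α (ee (wt α) g * g)
        = MvPolynomial.coeff α (∑ g ∈ F, ee (wt α) g * g) from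
        (MvPolynomial.coeff_sum _ _ _).symm,
      hk (wt α), coeff_pc, if_pos rfl]
  rw [final]
  apply Ideal.sum_mem
  intro g hg
  exact Ideal.mul_mem_left _ _ (hFG hg).1

/-- the coercion as a linear map -/
def coeL : MvPolynomial (Fin h) ℂ →ₗ[ℂ] MvPowerSeries (Fin h) ℂ where
  toFun q := ↑q
  map_add' a b := by
    show ((a + b : MvPolynomial (Fin h) ℂ) : MvPowerSeries (Fin h) ℂ)
      = (a : MvPowerSeries (Fin h) ℂ) + (b : MvPowerSeries (Fin h) ℂ)
    exact rfl
  map_smul' c a := by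
    show ((c • a : MvPolynomial (Fin h) ℂ) : MvPowerSeries (Fin h) ℂ) = c • (a : MvPowerSeries (Fin h) ℂ)
    ext β
    rw [MvPolynomial.coeff_coe, MvPolynomial.coeff_smul]
    simp

/-- degree-k component as a linear map to polynomials -/
def pcL (k : ℕ) : MvPowerSeries (Fin h) ℂ →ₗ[ℂ] MvPolynomial (Fin h) ℂ :=
  ∑ α ∈ Sk k, (MvPolynomial.monomial α).comp (MvPowerSeries.coeff α)

lemma pcL_apply (k : ℕ) (p : MvPowerSeries (Fin h) ℂ) : pcL k p = pc k p := by
  simp [pcL, pc, LinearMap.sum_apply]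

lemma coeL_apply (q : MvPolynomial (Fin h) ℂ) :
    coeL q = (q : MvPowerSeries (Fin h) ℂ) := rfl

/-- the pullback of P to homogeneous degree-k polynomials -/
def Usub (P : Ideal (MvPowerSeries (Fin h) ℂ)) (k : ℕ) :
    Submodule ℂ (homogeneousSubmodule (Fin h) ℂ k) :=
  Submodule.comap (coeL.comp (homogeneousSubmodule (Fin h) ℂ k).subtype)
    (Submodule.restrictScalars ℂ P)

lemma mem_Usub {P : Ideal (MvPowerSeries (Fin h) ℂ)} {k : ℕ}
    (x : homogeneousSubmodule (Fin h) ℂ k) :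
    x ∈ Usub P k ↔ ((x : MvPolynomial (Fin h) ℂ) : MvPowerSeries (Fin h) ℂ) ∈ P := by
  rw [Usub, Submodule.mem_comap, Submodule.restrictScalars_mem, LinearMap.comp_apply,
    Submodule.subtype_apply, coeL_apply]

/-- STEP A: components of elements of the double perp lie in P -/
lemma stepA (P : Ideal (MvPowerSeries (Fin h) ℂ))
    (hP : ∀ p ∈ P, ∀ k : ℕ, cps k p ∈ P)
    (k : ℕ) (p : MvPowerSeries (Fin h) ℂ)
    (hp : ∀ q ∈ perpOfPS (P : Set (MvPowerSeries (Fin h) ℂ)), pairing q p = 0) :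
    cps k p ∈ P := by
  classical
  have hvmem : pc k p ∈ homogeneousSubmodule (Fin h) ℂ k := pc_mem k p
  suffices hvU : (⟨pc k p, hvmem⟩ : homogeneousSubmodule (Fin h) ℂ k) ∈ Usub P k by
    have := (mem_Usub _).mp hvU
    rwa [coe_pc] at this
  apply mem_of_perp_perp (Bk k) (Bk_nondegenerate k) (Usub P k)
  intro w hw
  have hwperp : (w : MvPolynomial (Fin h) ℂ) ∈ perpOfPS (P : Set (MvPowerSeries (Fin h) ℂ)) := by
    intro p' hp'
    rw [← pairing_cps_of_homog w.2 p', ← coe_pc]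
    have hmem : (⟨pc k p', pc_mem k p'⟩ : homogeneousSubmodule (Fin h) ℂ k) ∈ Usub P k := by
      rw [mem_Usub]
      show ((pc k p' : MvPolynomial (Fin h) ℂ) : MvPowerSeries (Fin h) ℂ) ∈ P
      rw [coe_pc]
      exact hP p' hp' k
    rw [← Bk_apply k w ⟨pc k p', pc_mem k p'⟩]
    exact hw _ hmem
  have hzero := hp _ hwperp
  rw [Bk_apply, coe_pc, pairing_cps_of_homog w.2 p]
  exact hzero

/-- STEP S: perp of the colon ideal is in the image of starOp, degreewise -/
lemma stepS (P : Ideal (MvPowerSeries (Fin h) ℂ))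
    (hP : ∀ p ∈ P, ∀ k : ℕ, cps k p ∈ P)
    {m : MvPowerSeries (Fin h) ℂ} {d : ℕ}
    (hmd : ∀ α : Fin h →₀ ℕ, wt α ≠ d → MvPowerSeries.coeff α m = 0)
    (e : ℕ) (r : MvPolynomial (Fin h) ℂ) (hre : r ∈ homogeneousSubmodule (Fin h) ℂ e)
    (hr : ∀ p, m * p ∈ P → pairing r p = 0) :
    ∃ q ∈ perpOfPS (P : Set (MvPowerSeries (Fin h) ℂ)), starOp m q = r := by
  classical
  -- the multiplication-by-m map between homogeneous pieces
  set f0 : (homogeneousSubmodule (Fin h) ℂ e) →ₗ[ℂ] MvPolynomial (Fin h) ℂ :=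
    (pcL (e + d)).comp ((LinearMap.mulLeft ℂ m).comp
      (coeL.comp (homogeneousSubmodule (Fin h) ℂ e).subtype)) with hf0
  have hf0_apply : ∀ v : homogeneousSubmodule (Fin h) ℂ e,
      f0 v = pc (e + d) (m * ((v : MvPolynomial (Fin h) ℂ) : MvPowerSeries (Fin h) ℂ)) := by
    intro v
    rw [hf0]
    simp only [LinearMap.comp_apply, LinearMap.mulLeft_apply, Submodule.subtype_apply,
      coeL_apply, pcL_apply]
  set f : (homogeneousSubmodule (Fin h) ℂ e) →ₗ[ℂ] (homogeneousSubmodule (Fin h) ℂ (e + d)) :=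
    LinearMap.codRestrict _ f0 (fun v => by rw [hf0_apply]; exact pc_mem _ _) with hf
  have hf_apply : ∀ v : homogeneousSubmodule (Fin h) ℂ e,
      ((f v : MvPolynomial (Fin h) ℂ) : MvPowerSeries (Fin h) ℂ)
        = cps (e + d) (m * ((v : MvPolynomial (Fin h) ℂ) : MvPowerSeries (Fin h) ℂ)) := by
    intro v
    have : (f v : MvPolynomial (Fin h) ℂ) = f0 v := rfl
    rw [this, hf0_apply, coe_pc]
  -- apply the abstract adjoint-surjectivity lemma
  obtain ⟨w, hwU, hwf⟩ := exists_adjoint_perp (Bk e) (Bk_nondegenerate e)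
    (Bk (e + d)) (Bk_nondegenerate (e + d)) f (Usub P (e + d)) ⟨r, hre⟩ (by
      intro v hv
      rw [mem_Usub, hf_apply, ← mul_coe_homog hmd v.2] at hv
      exact hr _ hv)
  refine ⟨(w : MvPolynomial (Fin h) ℂ), ?_, ?_⟩
  · -- w is perpendicular to P
    intro p' hp'
    rw [← pairing_cps_of_homog w.2 p', ← coe_pc]
    have hmem : (⟨pc (e + d) p', pc_mem (e + d) p'⟩ :
        homogeneousSubmodule (Fin h) ℂ (e + d)) ∈ Usub P (e + d) := by
      rw [mem_Usub]
      show ((pc (e + d) p' : MvPolynomial (Fin h) ℂ) : MvPowerSeries (Fin h) ℂ) ∈ P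
      rw [coe_pc]
      exact hP p' hp' (e + d)
    rw [← Bk_apply (e + d) w ⟨pc (e + d) p', pc_mem (e + d) p'⟩]
    exact hwU _ hmem
  · -- starOp m w = r
    have hs : starOp m (w : MvPolynomial (Fin h) ℂ) ∈ homogeneousSubmodule (Fin h) ℂ e :=
      starOp_homog hmd w.2
    have key : ∀ v : homogeneousSubmodule (Fin h) ℂ e,
        Bk e ((⟨starOp m (w : MvPolynomial (Fin h) ℂ), hs⟩ :
          homogeneousSubmodule (Fin h) ℂ e) - ⟨r, hre⟩) v = 0 := by
      intro v
      rw [map_sub, LinearMap.sub_apply]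
      have h1 : Bk e (⟨starOp m (w : MvPolynomial (Fin h) ℂ), hs⟩ :
          homogeneousSubmodule (Fin h) ℂ e) v
          = pairing (starOp m (w : MvPolynomial (Fin h) ℂ))
            (((v : MvPolynomial (Fin h) ℂ)) : MvPowerSeries (Fin h) ℂ) := rfl
      have h2 : Bk e (⟨r, hre⟩ : homogeneousSubmodule (Fin h) ℂ e) v
          = pairing r (((v : MvPolynomial (Fin h) ℂ)) : MvPowerSeries (Fin h) ℂ) := rfl
      rw [h1, h2, pairing_starOp]
      have h3 := hwf v
      rw [Bk_apply, Bk_apply, hf_apply, ← mul_coe_homog hmd v.2] at h3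
      rw [h3, sub_self]
    have hzero := (Bk_nondegenerate e).1 _ key
    have : (⟨starOp m (w : MvPolynomial (Fin h) ℂ), hs⟩ :
        homogeneousSubmodule (Fin h) ℂ e) = ⟨r, hre⟩ := by
      rwa [sub_eq_zero] at hzero
    exact congrArg Subtype.val this

end S11

/-- for a homogeneous ideal P and homogeneous m,
(m ⋆ P^⊥)^⊥ = P : m and m ⋆ P^⊥ = (P : m)^⊥. -/
theorem stmt11 (h : ℕ) (P : Ideal (MvPowerSeries (Fin h) ℂ))
    (hP : ∀ p ∈ P, ∀ k : ℕ,
      ((fun α => if (∑ i, α i) = k then MvPowerSeries.coeff α p else 0) :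
        MvPowerSeries (Fin h) ℂ) ∈ P)
    (m : MvPowerSeries (Fin h) ℂ)
    (hm : ∃ d : ℕ, ∀ α : Fin h →₀ ℕ, (∑ i, α i) ≠ d → MvPowerSeries.coeff α m = 0) :
    perpOfPoly (starOp m '' perpOfPS (P : Set (MvPowerSeries (Fin h) ℂ))) =
      {p : MvPowerSeries (Fin h) ℂ | m * p ∈ P} ∧
    starOp m '' perpOfPS (P : Set (MvPowerSeries (Fin h) ℂ)) =
      perpOfPS {p : MvPowerSeries (Fin h) ℂ | m * p ∈ P} := by
  classical
  obtain ⟨d, hmd⟩ := hm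
  have hP' : ∀ p ∈ P, ∀ k : ℕ, S11.cps k p ∈ P := hP
  have hmd' : ∀ α : Fin h →₀ ℕ, S11.wt α ≠ d → MvPowerSeries.coeff α m = 0 := hmd
  have colon_sub : ∀ p : MvPowerSeries (Fin h) ℂ, m * p ∈ P →
      ∀ q' ∈ starOp m '' perpOfPS (P : Set (MvPowerSeries (Fin h) ℂ)), pairing q' p = 0 := by
    intro p hp q' hq'
    obtain ⟨q, hq, rfl⟩ := hq'
    rw [S11.pairing_starOp]
    exact hq _ hp
  constructor
  · ext p
    simp only [Set.mem_setOf_eq]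
    constructor
    · intro hp
      have hq : ∀ q ∈ perpOfPS (P : Set (MvPowerSeries (Fin h) ℂ)),
          pairing q (m * p) = 0 := by
        intro q hqperp
        rw [← S11.pairing_starOp]
        exact hp _ ⟨q, hqperp, rfl⟩
      apply S11.mem_of_components P (m * p)
      intro k
      exact S11.stepA P hP' k (m * p) hq
    · intro hp q' hq'
      exact colon_sub p hp q' hq'
  · ext q'
    constructor
    · rintro ⟨q, hq, rfl⟩
      intro p hp
      rw [S11.pairing_starOp]
      exact hq _ hp
    · intro hq'
      have hperpcomp : ∀ i : ℕ, ∀ p, m * p ∈ P →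
          pairing (MvPolynomial.homogeneousComponent i q') p = 0 := by
        intro i p hp
        rw [S11.pairing_homComp]
        apply hq'
        show m * S11.cps i p ∈ P
        rw [S11.mul_cps hmd' i p]
        exact hP' _ hp (i + d)
      choose qs hqs1 hqs2 using fun i : ℕ => S11.stepS P hP' hmd' i
        (MvPolynomial.homogeneousComponent i q')
        (MvPolynomial.homogeneousComponent_mem i q') (hperpcomp i)
      refine ⟨∑ i ∈ Finset.range (q'.totalDegree + 1), qs i, ?_, ?_⟩
      · intro p hp
        rw [S11.pairing_sum_left]
        exact Finset.sum_eq_zero fun i _ => hqs1 i _ hp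
      · rw [S11.starOp_sum, Finset.sum_congr rfl (fun i _ => hqs2 i)]
        exact MvPolynomial.sum_homogeneousComponent q'
end
end

section
/- Let v, v' ∈ ℂ^n with v − v' ∈ ℤ^n, and define p_{v'←v} := Π_{ν=1}^n Π_{μ=1}^{v_ν − v'_ν} (∂_{y_ν} + v_ν − μ + 1) ∈ ℂ[∂_y]_0 (empty products when v'_ν − v_ν ∈ ℕ are 1). Then there exists a unit p̃ in the local ring ℂ[∂_y]_0 such that p_{v'←v} = p̃ · ∂_y^{nsupp(v')∖nsupp(v)}, where nsupp(w) := { ν | w_ν ∈ ℤ_{<0} } and ∂_y^J = Π_{ν∈J}∂_{y_ν}. In particular, p_{v'←v} is a unit of ℂ[∂_y]_0 if and only if nsupp(v') ⊆ nsupp(v). -/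
noncomputable section
open MvPolynomial

instance kerPrime (n : ℕ) :
    (RingHom.ker (constantCoeff : MvPolynomial (Fin n) ℂ →+* ℂ)).IsPrime :=
  RingHom.ker_isPrime _

/-- the local ring ℂ[∂_y]₀. -/
abbrev LocPoly (n : ℕ) :=
  Localization.AtPrime (RingHom.ker (constantCoeff : MvPolynomial (Fin n) ℂ →+* ℂ))

/-- the squarefree monomial ∂_y^J. -/
def sqMono {n : ℕ} (J : Finset (Fin n)) : MvPolynomial (Fin n) ℂ := ∏ ν ∈ J, X ν

open Classical in
/-- negative support: nsupp(w) = { ν | w_ν ∈ ℤ_{<0} }. -/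
def nsuppF {n : ℕ} (w : Fin n → ℂ) : Finset (Fin n) :=
  Finset.univ.filter (fun ν => ∃ z : ℤ, z < 0 ∧ w ν = z)

/-- the operator p_{v'←v} = ∏_ν ∏_{μ=1}^{v_ν−v'_ν} (∂_{y_ν} + v_ν − μ + 1),
written with μ reindexed by μ−1 ∈ range((v_ν−v'_ν)⁺); empty products (when
v'_ν − v_ν ∈ ℕ, i.e. u_ν ≤ 0) are 1. -/
def pOp {n : ℕ} (v : Fin n → ℂ) (u : Fin n → ℤ) : MvPolynomial (Fin n) ℂ :=
  ∏ ν, ∏ μ ∈ Finset.range (u ν).toNat, (X ν + C (v ν - μ))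

lemma unit_factor {n : ℕ} (ν : Fin n) (c : ℂ) (hc : c ≠ 0) :
    IsUnit (algebraMap (MvPolynomial (Fin n) ℂ) (LocPoly n) (X ν + C c)) := by
  rw [IsLocalization.AtPrime.isUnit_to_map_iff (LocPoly n)
    (RingHom.ker (constantCoeff : MvPolynomial (Fin n) ℂ →+* ℂ))]
  simp [Ideal.primeCompl, RingHom.mem_ker, hc]

lemma mem_sdiff_iff {n : ℕ} (v v' : Fin n → ℂ) (u : Fin n → ℤ)
    (hu : ∀ ν, v ν - v' ν = (u ν : ℂ)) (ν : Fin n) :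
    ν ∈ nsuppF v' \ nsuppF v ↔ ∃ m : ℕ, (m : ℤ) < u ν ∧ v ν = m := by
  classical
  simp only [Finset.mem_sdiff, nsuppF, Finset.mem_filter, Finset.mem_univ, true_and]
  constructor
  · rintro ⟨⟨z, hz, hz'⟩, hnv⟩
    have hv : v ν = ((z + u ν : ℤ) : ℂ) := by
      push_cast
      have := hu ν
      rw [hz'] at this
      linear_combination this
    have hnn : 0 ≤ z + u ν := by
      by_contra h
      exact hnv ⟨z + u ν, by omega, hv⟩
    refine ⟨(z + u ν).toNat, by omega, by rw [hv]; norm_cast; omega⟩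
  · rintro ⟨m, hm, hv⟩
    constructor
    · refine ⟨(m : ℤ) - u ν, by omega, ?_⟩
      have := hu ν
      rw [hv] at this
      push_cast
      linear_combination -this
    · rintro ⟨z, hz, hz'⟩
      rw [hv] at hz'
      have : (m : ℤ) = z := by exact_mod_cast hz'
      omega

/-- p_{v'←v} = (unit) · ∂^(nsupp(v')∖nsupp(v)) in ℂ[∂_y]₀, and
p_{v'←v} is a unit iff nsupp(v') ⊆ nsupp(v). -/
theorem stmt17 (n : ℕ) (v v' : Fin n → ℂ) (u : Fin n → ℤ)
    (hu : ∀ ν, v ν - v' ν = (u ν : ℂ)) :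
    (∃ ptil : (LocPoly n)ˣ,
      algebraMap (MvPolynomial (Fin n) ℂ) (LocPoly n) (pOp v u) =
        (ptil : LocPoly n) *
          algebraMap (MvPolynomial (Fin n) ℂ) (LocPoly n) (sqMono (nsuppF v' \ nsuppF v))) ∧
    (IsUnit (algebraMap (MvPolynomial (Fin n) ℂ) (LocPoly n) (pOp v u)) ↔
      nsuppF v' ⊆ nsuppF v) := by
  classical
  set S : Finset (Fin n) := nsuppF v' \ nsuppF v with hS
  set f := algebraMap (MvPolynomial (Fin n) ℂ) (LocPoly n) with hf
  -- per-coordinate lemma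
  have key : ∀ ν : Fin n, ∃ w : (LocPoly n)ˣ,
      f (∏ μ ∈ Finset.range (u ν).toNat, (X ν + C (v ν - μ))) =
        (w : LocPoly n) * f (if ν ∈ S then X ν else 1) := by
    intro ν
    by_cases hν : ν ∈ S
    · obtain ⟨m, hm, hvm⟩ := (mem_sdiff_iff v v' u hu ν).1 hν
      have hmlt : m < (u ν).toNat := Int.lt_toNat.2 hm
      have hmem : m ∈ Finset.range (u ν).toNat := Finset.mem_range.2 hmlt
      have hsplit : ∏ μ ∈ Finset.range (u ν).toNat, (X ν + C (v ν - μ)) =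
          (X ν + C (v ν - m)) *
            ∏ μ ∈ (Finset.range (u ν).toNat).erase m, (X ν + C (v ν - μ)) :=
        (Finset.mul_prod_erase _ _ hmem).symm
      have hunit : IsUnit (f (∏ μ ∈ (Finset.range (u ν).toNat).erase m,
          (X ν + C (v ν - μ)))) := by
        rw [map_prod]
        refine Finset.prod_induction _ IsUnit (fun a b => IsUnit.mul) isUnit_one
          (fun μ hμ => ?_)
        refine unit_factor ν _ ?_
        have hμm : μ ≠ m := (Finset.mem_erase.1 hμ).1
        rw [hvm]
        intro h
        have : (m : ℂ) = μ := by linear_combination h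
        exact hμm (by exact_mod_cast this.symm)
      refine ⟨hunit.unit, ?_⟩
      rw [hsplit, map_mul, if_pos hν, IsUnit.unit_spec]
      have : (X ν + C (v ν - m) : MvPolynomial (Fin n) ℂ) = X ν := by
        rw [hvm]; simp
      rw [this, mul_comm]
    · have hunit : IsUnit (f (∏ μ ∈ Finset.range (u ν).toNat, (X ν + C (v ν - μ)))) := by
        rw [map_prod]
        refine Finset.prod_induction _ IsUnit (fun a b => IsUnit.mul) isUnit_one
          (fun μ hμ => ?_)
        refine unit_factor ν _ ?_
        intro h
        have : v ν = (μ : ℂ) := by linear_combination h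
        exact hν ((mem_sdiff_iff v v' u hu ν).2 ⟨μ, by
          rw [Finset.mem_range] at hμ; omega, this⟩)
      exact ⟨hunit.unit, by rw [if_neg hν, map_one, mul_one, IsUnit.unit_spec]⟩
  choose w hw using key
  have hmain : f (pOp v u) = (↑(∏ ν, w ν) : LocPoly n) * f (sqMono S) := by
    rw [pOp, map_prod]
    calc ∏ ν, f (∏ μ ∈ Finset.range (u ν).toNat, (X ν + C (v ν - μ)))
        = ∏ ν, ((w ν : LocPoly n) * f (if ν ∈ S then X ν else 1)) := by
          exact Finset.prod_congr rfl (fun ν _ => hw ν)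
      _ = (∏ ν, (w ν : LocPoly n)) * ∏ ν, f (if ν ∈ S then X ν else 1) :=
          Finset.prod_mul_distrib
      _ = (↑(∏ ν, w ν) : LocPoly n) * f (sqMono S) := by
          rw [Units.coe_prod]
          congr 1
          rw [← map_prod]
          congr 1
          rw [sqMono, Finset.prod_ite_mem, Finset.univ_inter]
  constructor
  · exact ⟨∏ ν, w ν, hmain⟩
  · rw [hmain, Units.isUnit_units_mul,
      IsLocalization.AtPrime.isUnit_to_map_iff (LocPoly n)
        (RingHom.ker (constantCoeff : MvPolynomial (Fin n) ℂ →+* ℂ))]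
    have hcc : constantCoeff (sqMono S) = if S = ∅ then 1 else (0 : ℂ) := by
      rw [sqMono, map_prod]
      simp only [constantCoeff_X, Finset.prod_const, pow_eq_zero_iff]
      rcases eq_or_ne S ∅ with h | h
      · simp [h]
      · rw [if_neg h]
        exact zero_pow (by simpa [Finset.card_eq_zero] using h)
    constructor
    · intro h
      rw [← Finset.sdiff_eq_empty_iff_subset, ← hS]
      by_contra hne
      apply h
      simp [Ideal.primeCompl, RingHom.mem_ker, hcc, hne]
    · intro h
      have hSe : S = ∅ := by rw [hS, Finset.sdiff_eq_empty_iff_subset]; exact h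
      rw [hSe] at hcc
      simp only [if_pos rfl] at hcc
      simp [Ideal.primeCompl, RingHom.mem_ker, hSe, hcc]
end
end

section
/- Let v, v' ∈ ℂ^n with u := v' − v ∈ ℤ^n, and let r ∈ ℂ[y_1,...,y_n]. Then ∂_x^{u_−} • (r(log x) · x^v) = (p_{v'←v} • r)(log x) · x^{v − u_−}, where u_± ∈ ℕ^n are the positive and negative parts of u, p_{v'←v} := Π_{ν=1}^n Π_{μ=1}^{v_ν − v'_ν}(∂_{y_ν} + v_ν − μ + 1), and the operator acts on r in the y-variables before substituting y = log x. -/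
noncomputable section
open MvPolynomial

/-- partial derivative of a function of n real variables in direction ν. -/
def pd {n : ℕ} (ν : Fin n) (f : (Fin n → ℝ) → ℂ) : (Fin n → ℝ) → ℂ :=
  fun x => deriv (fun t : ℝ => f (Function.update x ν t)) (x ν)

/-- iterated partial derivative ∂_x^k = ∏_ν ∂_{x_ν}^{k_ν}. -/
def pdIter {n : ℕ} (k : Fin n → ℕ) (f : (Fin n → ℝ) → ℂ) : (Fin n → ℝ) → ℂ :=
  (List.finRange n).foldr (fun ν g => (pd ν)^[k ν] g) f

/-- iterated pderiv ∂_y^β on polynomials. -/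
def pderivM {n : ℕ} (β : Fin n →₀ ℕ) (r : MvPolynomial (Fin n) ℂ) : MvPolynomial (Fin n) ℂ :=
  (List.finRange n).foldr (fun ν t => (fun s => MvPolynomial.pderiv ν s)^[β ν] t) r

/-- action of a constant-coefficient operator q(∂_y) on a polynomial r(y). -/
def opPoly {n : ℕ} (q r : MvPolynomial (Fin n) ℂ) : MvPolynomial (Fin n) ℂ :=
  ∑ β ∈ q.support, q.coeff β • pderivM β r

/-- the function r(log x)·x^v on the positive orthant. -/
def logFun {n : ℕ} (r : MvPolynomial (Fin n) ℂ) (v : Fin n → ℂ) : (Fin n → ℝ) → ℂ :=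
  fun x => MvPolynomial.eval (fun ν => (Real.log (x ν) : ℂ)) r * ∏ ν, (x ν : ℂ) ^ (v ν)

/- ### Algebraic auxiliary lemmas -/

lemma aux_pderiv_comm {n : ℕ} (i j : Fin n) (p : MvPolynomial (Fin n) ℂ) :
    pderiv i (pderiv j p) = pderiv j (pderiv i p) := by
  induction p using MvPolynomial.induction_on' with
  | add p q hp hq => simp [map_add, hp, hq]
  | monomial s a =>
    rcases eq_or_ne i j with rfl | hij
    · rfl
    · classical
      simp only [pderiv_monomial]
      have h1 : s - Finsupp.single j 1 - Finsupp.single i 1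
          = s - Finsupp.single i 1 - Finsupp.single j 1 := by
        ext k
        simp only [Finsupp.tsub_apply, Finsupp.single_apply]
        split_ifs <;> omega
      have h2 : ((s - Finsupp.single j 1 : Fin n →₀ ℕ)) i = s i := by
        rw [Finsupp.tsub_apply, Finsupp.single_eq_of_ne' (Ne.symm hij), Nat.sub_zero]
      have h3 : ((s - Finsupp.single i 1 : Fin n →₀ ℕ)) j = s j := by
        rw [Finsupp.tsub_apply, Finsupp.single_eq_of_ne' hij, Nat.sub_zero]
      rw [h1, h2, h3, mul_right_comm]

lemma aux_iter_comm {n : ℕ} (μ ν : Fin n) (k : ℕ) (r : MvPolynomial (Fin n) ℂ) :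
    (fun s => pderiv μ s)^[k] (pderiv ν r) = pderiv ν ((fun s => pderiv μ s)^[k] r) := by
  induction k generalizing r with
  | zero => rfl
  | succ k ih => rw [Function.iterate_succ_apply', Function.iterate_succ_apply', ih,
      aux_pderiv_comm]

/-- foldr of pderiv iterates over a list. -/
def pdF {n : ℕ} (l : List (Fin n)) (β : Fin n →₀ ℕ) (r : MvPolynomial (Fin n) ℂ) :
    MvPolynomial (Fin n) ℂ :=
  l.foldr (fun ν t => (fun s => MvPolynomial.pderiv ν s)^[β ν] t) r

lemma pderivM_eq_pdF {n : ℕ} (β : Fin n →₀ ℕ) (r : MvPolynomial (Fin n) ℂ) :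
    pderivM β r = pdF (List.finRange n) β r := rfl

lemma pdF_pderiv_comm {n : ℕ} (l : List (Fin n)) (β : Fin n →₀ ℕ) (ν : Fin n)
    (r : MvPolynomial (Fin n) ℂ) : pdF l β (pderiv ν r) = pderiv ν (pdF l β r) := by
  induction l generalizing r with
  | nil => rfl
  | cons μ tl ih =>
    show (fun s => pderiv μ s)^[β μ] (pdF tl β (pderiv ν r))
        = pderiv ν ((fun s => pderiv μ s)^[β μ] (pdF tl β r))
    rw [ih, aux_iter_comm]

lemma pdF_iter_comm {n : ℕ} (l : List (Fin n)) (β : Fin n →₀ ℕ) (ν : Fin n) (k : ℕ)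
    (r : MvPolynomial (Fin n) ℂ) :
    pdF l β ((fun s => pderiv ν s)^[k] r) = (fun s => pderiv ν s)^[k] (pdF l β r) := by
  induction k generalizing r with
  | zero => rfl
  | succ k ih => rw [Function.iterate_succ_apply', Function.iterate_succ_apply',
      pdF_pderiv_comm, ih]

lemma pdF_add_index {n : ℕ} (l : List (Fin n)) (β₁ β₂ : Fin n →₀ ℕ)
    (r : MvPolynomial (Fin n) ℂ) : pdF l (β₁ + β₂) r = pdF l β₁ (pdF l β₂ r) := by
  induction l generalizing r with
  | nil => rfl
  | cons μ tl ih =>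
    show (fun s => pderiv μ s)^[(β₁ + β₂) μ] (pdF tl (β₁ + β₂) r)
        = (fun s => pderiv μ s)^[β₁ μ] (pdF tl β₁ ((fun s => pderiv μ s)^[β₂ μ] (pdF tl β₂ r)))
    rw [pdF_iter_comm, Finsupp.add_apply, Function.iterate_add_apply, ih]

lemma pdF_zero_of {n : ℕ} (l : List (Fin n)) (β : Fin n →₀ ℕ)
    (h : ∀ μ ∈ l, β μ = 0) (r : MvPolynomial (Fin n) ℂ) : pdF l β r = r := by
  induction l with
  | nil => rfl
  | cons μ tl ih =>
    show (fun s => pderiv μ s)^[β μ] (pdF tl β r) = r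
    rw [ih (fun ρ hρ => h ρ (List.mem_cons_of_mem _ hρ)), h μ List.mem_cons_self]
    rfl

lemma pdF_single {n : ℕ} (l : List (Fin n)) (hnd : l.Nodup) (ν : Fin n) (hν : ν ∈ l) (k : ℕ)
    (r : MvPolynomial (Fin n) ℂ) :
    pdF l (Finsupp.single ν k) r = (fun s => pderiv ν s)^[k] r := by
  induction l with
  | nil => exact absurd hν List.not_mem_nil
  | cons μ tl ih =>
    rcases List.nodup_cons.mp hnd with ⟨hμtl, hndtl⟩
    show (fun s => pderiv μ s)^[(Finsupp.single ν k) μ] (pdF tl (Finsupp.single ν k) r)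
        = (fun s => pderiv ν s)^[k] r
    rcases eq_or_ne μ ν with rfl | hne
    · rw [pdF_zero_of tl _ (fun ρ hρ => Finsupp.single_eq_of_ne' (fun h => hμtl (by rw [h]; exact hρ))),
        Finsupp.single_eq_same]
    · have hνtl : ν ∈ tl := by
        rcases List.mem_cons.mp hν with h | h
        · exact absurd h.symm hne
        · exact h
      rw [ih hndtl hνtl, Finsupp.single_eq_of_ne' (Ne.symm hne)]
      rfl

lemma aux_iter_smul {n : ℕ} (ν : Fin n) (k : ℕ) (c : ℂ) (r : MvPolynomial (Fin n) ℂ) :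
    (fun s => pderiv ν s)^[k] (c • r) = c • (fun s => pderiv ν s)^[k] r := by
  induction k generalizing r with
  | zero => rfl
  | succ k ih => rw [Function.iterate_succ_apply', Function.iterate_succ_apply', ih, Derivation.map_smul]

lemma aux_iter_add {n : ℕ} (ν : Fin n) (k : ℕ) (r s : MvPolynomial (Fin n) ℂ) :
    (fun t => pderiv ν t)^[k] (r + s)
      = (fun t => pderiv ν t)^[k] r + (fun t => pderiv ν t)^[k] s := by
  induction k generalizing r s with
  | zero => rfl
  | succ k ih => rw [Function.iterate_succ_apply', Function.iterate_succ_apply',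
      Function.iterate_succ_apply', ih, map_add]

lemma pdF_smul {n : ℕ} (l : List (Fin n)) (β : Fin n →₀ ℕ) (c : ℂ)
    (r : MvPolynomial (Fin n) ℂ) : pdF l β (c • r) = c • pdF l β r := by
  induction l generalizing r with
  | nil => rfl
  | cons μ tl ih =>
    show (fun s => pderiv μ s)^[β μ] (pdF tl β (c • r)) = c • (fun s => pderiv μ s)^[β μ] (pdF tl β r)
    rw [ih, aux_iter_smul]

lemma pdF_add {n : ℕ} (l : List (Fin n)) (β : Fin n →₀ ℕ)
    (r s : MvPolynomial (Fin n) ℂ) : pdF l β (r + s) = pdF l β r + pdF l β s := by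
  induction l generalizing r s with
  | nil => rfl
  | cons μ tl ih =>
    show (fun t => pderiv μ t)^[β μ] (pdF tl β (r + s))
        = (fun t => pderiv μ t)^[β μ] (pdF tl β r) + (fun t => pderiv μ t)^[β μ] (pdF tl β s)
    rw [ih, aux_iter_add]

lemma pderivM_add_index {n : ℕ} (β₁ β₂ : Fin n →₀ ℕ) (r : MvPolynomial (Fin n) ℂ) :
    pderivM (β₁ + β₂) r = pderivM β₁ (pderivM β₂ r) := pdF_add_index _ _ _ _

lemma pderivM_smul {n : ℕ} (β : Fin n →₀ ℕ) (c : ℂ) (r : MvPolynomial (Fin n) ℂ) :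
    pderivM β (c • r) = c • pderivM β r := pdF_smul _ _ _ _

lemma pderivM_add {n : ℕ} (β : Fin n →₀ ℕ) (r s : MvPolynomial (Fin n) ℂ) :
    pderivM β (r + s) = pderivM β r + pderivM β s := pdF_add _ _ _ _

lemma pderivM_zero {n : ℕ} (r : MvPolynomial (Fin n) ℂ) : pderivM 0 r = r :=
  pdF_zero_of _ _ (fun _ _ => rfl) r

lemma pderivM_single_one {n : ℕ} (ν : Fin n) (r : MvPolynomial (Fin n) ℂ) :
    pderivM (Finsupp.single ν 1) r = pderiv ν r := by
  rw [pderivM_eq_pdF, pdF_single _ (List.nodup_finRange n) ν (List.mem_finRange ν) 1]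
  rfl

lemma opPoly_eq_sum {n : ℕ} (q r : MvPolynomial (Fin n) ℂ) :
    opPoly q r = (AddMonoidAlgebra.coeff q).sum (fun β c => c • pderivM β r) := by
  rw [opPoly, MvPolynomial.sum_def]

lemma opPoly_monomial {n : ℕ} (β : Fin n →₀ ℕ) (c : ℂ) (r : MvPolynomial (Fin n) ℂ) :
    opPoly (monomial β c) r = c • pderivM β r := by
  rcases eq_or_ne c 0 with rfl | hc
  · simp [opPoly]
  · rw [opPoly]
    rw [MvPolynomial.support_monomial, if_neg hc, Finset.sum_singleton, coeff_monomial, if_pos rfl]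

lemma opPoly_add_left {n : ℕ} (p q r : MvPolynomial (Fin n) ℂ) :
    opPoly (p + q) r = opPoly p r + opPoly q r := by
  rw [opPoly_eq_sum, opPoly_eq_sum, opPoly_eq_sum, AddMonoidAlgebra.coeff_add]
  exact Finsupp.sum_add_index' (fun β => zero_smul ℂ _) (fun β c₁ c₂ => add_smul c₁ c₂ _)

lemma opPoly_add_right {n : ℕ} (q r s : MvPolynomial (Fin n) ℂ) :
    opPoly q (r + s) = opPoly q r + opPoly q s := by
  simp only [opPoly, pderivM_add, smul_add]
  rw [Finset.sum_add_distrib]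

lemma opPoly_smul_right {n : ℕ} (q : MvPolynomial (Fin n) ℂ) (c : ℂ)
    (r : MvPolynomial (Fin n) ℂ) : opPoly q (c • r) = c • opPoly q r := by
  simp only [opPoly, pderivM_smul, Finset.smul_sum]
  congr 1; funext β; rw [smul_comm]

lemma opPoly_monomial_mul {n : ℕ} (β : Fin n →₀ ℕ) (c : ℂ) (q r : MvPolynomial (Fin n) ℂ) :
    opPoly (monomial β c * q) r = opPoly (monomial β c) (opPoly q r) := by
  induction q using MvPolynomial.induction_on' with
  | monomial γ d =>
    rw [monomial_mul, opPoly_monomial, opPoly_monomial, opPoly_monomial,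
      pderivM_add_index, pderivM_smul, smul_smul]
  | add q₁ q₂ h₁ h₂ =>
    rw [mul_add, opPoly_add_left, opPoly_add_left, opPoly_add_right, h₁, h₂]

lemma opPoly_mul {n : ℕ} (p q r : MvPolynomial (Fin n) ℂ) :
    opPoly (p * q) r = opPoly p (opPoly q r) := by
  induction p using MvPolynomial.induction_on' with
  | monomial β c => exact opPoly_monomial_mul β c q r
  | add p₁ p₂ h₁ h₂ => rw [add_mul, opPoly_add_left, opPoly_add_left, h₁, h₂]

lemma opPoly_one {n : ℕ} (r : MvPolynomial (Fin n) ℂ) : opPoly 1 r = r := by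
  rw [show (1 : MvPolynomial (Fin n) ℂ) = monomial 0 1 by rw [monomial_zero', C_1],
    opPoly_monomial, pderivM_zero, one_smul]

lemma opPoly_X_add_C {n : ℕ} (ν : Fin n) (a : ℂ) (t : MvPolynomial (Fin n) ℂ) :
    opPoly (X ν + C a) t = pderiv ν t + C a * t := by
  rw [opPoly_add_left, show (X ν : MvPolynomial (Fin n) ℂ) = monomial (Finsupp.single ν 1) 1
      from rfl, opPoly_monomial, show (C a : MvPolynomial (Fin n) ℂ) = monomial 0 a from rfl,
    opPoly_monomial, pderivM_zero, pderivM_single_one, one_smul, smul_eq_C_mul, C_apply]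

/-- the operator (∂_ν + (a-k+1))⋯(∂_ν + a) applied to a polynomial. -/
def opIter {n : ℕ} (ν : Fin n) (a : ℂ) : ℕ → MvPolynomial (Fin n) ℂ → MvPolynomial (Fin n) ℂ
  | 0, s => s
  | (k+1), s => pderiv ν (opIter ν a k s) + C (a - k) * opIter ν a k s

lemma opIter_eq {n : ℕ} (ν : Fin n) (a : ℂ) (k : ℕ) (s : MvPolynomial (Fin n) ℂ) :
    opIter ν a k s = opPoly (∏ μ ∈ Finset.range k, (X ν + C (a - μ))) s := by
  induction k with
  | zero => rw [Finset.range_zero, Finset.prod_empty, opPoly_one]; rfl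
  | succ k ih =>
    rw [Finset.prod_range_succ, mul_comm, opPoly_mul, opPoly_X_add_C,
      show opIter ν a (k+1) s = pderiv ν (opIter ν a k s) + C (a - k) * opIter ν a k s from rfl,
      ih]

/- ### Analytic auxiliary lemmas -/

open Filter in
lemma aux_hasDerivAt_cpow {c : ℂ} {t : ℝ} (ht : 0 < t) :
    HasDerivAt (fun s : ℝ => ((s : ℝ) : ℂ) ^ c) (c * ((t : ℝ) : ℂ) ^ c / t) t := by
  have hlog : HasDerivAt (fun s : ℝ => ((Real.log s : ℝ) : ℂ)) (((t⁻¹ : ℝ) : ℝ) : ℂ) t :=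
    (Real.hasDerivAt_log ht.ne').ofReal_comp
  have h2 : HasDerivAt (fun s : ℝ => Complex.exp (c * ((Real.log s : ℝ) : ℂ)))
      (Complex.exp (c * ((Real.log t : ℝ) : ℂ)) * (c * ((t⁻¹ : ℝ) : ℂ))) t :=
    (hlog.const_mul c).cexp
  have heq : (fun s : ℝ => ((s : ℝ) : ℂ) ^ c)
      =ᶠ[nhds t] fun s : ℝ => Complex.exp (c * ((Real.log s : ℝ) : ℂ)) := by
    filter_upwards [Ioi_mem_nhds ht] with s hs
    rw [Complex.cpow_def_of_ne_zero (Complex.ofReal_ne_zero.mpr hs.ne'),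
      Complex.ofReal_log hs.le, mul_comm]
  have hval : Complex.exp (c * ((Real.log t : ℝ) : ℂ)) = ((t : ℝ) : ℂ) ^ c := by
    rw [Complex.cpow_def_of_ne_zero (Complex.ofReal_ne_zero.mpr ht.ne'),
      Complex.ofReal_log ht.le, mul_comm]
  have h3 := h2.congr_of_eventuallyEq heq
  rw [hval] at h3
  refine h3.congr_deriv ?_
  push_cast
  rw [div_eq_mul_inv]
  ring

lemma aux_update_pos {n : ℕ} {x : Fin n → ℝ} (hx : ∀ μ, 0 < x μ) (ν : Fin n) {t : ℝ}
    (ht : 0 < t) : ∀ μ, 0 < Function.update x ν t μ := by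
  intro μ
  rcases eq_or_ne μ ν with rfl | h
  · rw [Function.update_self]; exact ht
  · rw [Function.update_of_ne h]; exact hx μ

lemma aux_prod_update {n : ℕ} (x : Fin n → ℝ) (v : Fin n → ℂ) (ν : Fin n) (t : ℝ) :
    ∏ μ, ((Function.update x ν t μ : ℝ) : ℂ) ^ (v μ)
      = ((t : ℝ) : ℂ) ^ (v ν) * ∏ μ ∈ Finset.univ.erase ν, ((x μ : ℝ) : ℂ) ^ (v μ) := by
  rw [← Finset.mul_prod_erase Finset.univ _ (Finset.mem_univ ν), Function.update_self]
  congr 1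
  exact Finset.prod_congr rfl fun μ hμ => by
    rw [Function.update_of_ne (Finset.ne_of_mem_erase hμ)]

lemma aux_prod_pow {n : ℕ} (x : Fin n → ℝ) (v : Fin n → ℂ) (ν : Fin n) :
    ∏ μ, ((x μ : ℝ) : ℂ) ^ (v μ)
      = ((x ν : ℝ) : ℂ) ^ (v ν) * ∏ μ ∈ Finset.univ.erase ν, ((x μ : ℝ) : ℂ) ^ (v μ) :=
  (Finset.mul_prod_erase Finset.univ _ (Finset.mem_univ ν)).symm

lemma aux_prod_sub_e {n : ℕ} (x : Fin n → ℝ) (hx : ∀ μ, 0 < x μ) (v : Fin n → ℂ) (ν : Fin n) :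
    ∏ μ, ((x μ : ℝ) : ℂ) ^ (v μ - if μ = ν then 1 else 0)
      = (∏ μ, ((x μ : ℝ) : ℂ) ^ (v μ)) / (x ν) := by
  have hν : ((x ν : ℝ) : ℂ) ≠ 0 := Complex.ofReal_ne_zero.mpr (hx ν).ne'
  have hprod : ∏ μ ∈ Finset.univ.erase ν, ((x μ : ℝ) : ℂ) ^ (v μ - if μ = ν then 1 else 0)
      = ∏ μ ∈ Finset.univ.erase ν, ((x μ : ℝ) : ℂ) ^ (v μ) :=
    Finset.prod_congr rfl fun μ hμ => by rw [if_neg (Finset.ne_of_mem_erase hμ), sub_zero]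
  rw [aux_prod_pow x (fun μ => v μ - if μ = ν then 1 else 0) ν, aux_prod_pow x v ν, hprod,
    if_pos rfl, Complex.cpow_sub _ _ hν, Complex.cpow_one]
  ring

lemma aux_logFun_sub_e {n : ℕ} (q : MvPolynomial (Fin n) ℂ) (v : Fin n → ℂ) (ν : Fin n)
    (x : Fin n → ℝ) (hx : ∀ μ, 0 < x μ) :
    logFun q (fun μ => v μ - if μ = ν then 1 else 0) x = logFun q v x / (x ν) := by
  unfold logFun
  rw [aux_prod_sub_e x hx v ν, mul_div_assoc]

lemma aux_hasDerivAt_logFun {n : ℕ} (ν : Fin n) (r : MvPolynomial (Fin n) ℂ) (v : Fin n → ℂ)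
    (x : Fin n → ℝ) (hx : ∀ μ, 0 < x μ) :
    HasDerivAt (fun t : ℝ => logFun r v (Function.update x ν t))
      (logFun (pderiv ν r + C (v ν) * r) (fun μ => v μ - if μ = ν then 1 else 0) x) (x ν) := by
  induction r using MvPolynomial.induction_on with
  | C a =>
    have key := ((aux_hasDerivAt_cpow (c := v ν) (hx ν)).mul_const
      (∏ μ ∈ Finset.univ.erase ν, ((x μ : ℝ) : ℂ) ^ (v μ))).const_mul a
    have hfun : (fun t : ℝ => logFun (C a) v (Function.update x ν t))
        = fun t : ℝ => a * (((t : ℝ) : ℂ) ^ (v ν)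
            * ∏ μ ∈ Finset.univ.erase ν, ((x μ : ℝ) : ℂ) ^ (v μ)) := by
      funext t
      simp only [logFun, eval_C, aux_prod_update]
    rw [hfun]
    refine key.congr_deriv ?_
    rw [aux_logFun_sub_e _ _ _ _ hx]
    unfold logFun
    rw [pderiv_C, zero_add, ← C_mul, eval_C, aux_prod_pow x v ν]
    have hν : ((x ν : ℝ) : ℂ) ≠ 0 := Complex.ofReal_ne_zero.mpr (hx ν).ne'
    field_simp
  | add p q hp hq =>
    have key := hp.add hq
    have hfun : (fun t : ℝ => logFun (p + q) v (Function.update x ν t))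
        = fun t : ℝ => logFun p v (Function.update x ν t)
            + logFun q v (Function.update x ν t) := by
      funext t
      simp only [logFun, map_add, add_mul]
    rw [hfun]
    refine key.congr_deriv ?_
    simp only [logFun, map_add, mul_add, add_mul]
    ring
  | mul_X p i hp =>
    have hfun : ∀ y : Fin n → ℝ, logFun (p * X i) v y
        = logFun p v y * ((Real.log (y i) : ℝ) : ℂ) := by
      intro y
      simp only [logFun, eval_mul, eval_X]
      ring
    have hfe : (fun t : ℝ => logFun (p * X i) v (Function.update x ν t))
        = fun t : ℝ => logFun p v (Function.update x ν t)
            * ((Real.log (Function.update x ν t i) : ℝ) : ℂ) := funext fun t => hfun _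
    rcases eq_or_ne i ν with rfl | hne
    · simp only [Function.update_self] at hfe
      have hG : HasDerivAt (fun t : ℝ => ((Real.log t : ℝ) : ℂ)) (((x i)⁻¹ : ℝ) : ℂ) (x i) :=
        (Real.hasDerivAt_log (hx i).ne').ofReal_comp
      have key := hp.mul hG
      rw [hfe]
      refine key.congr_deriv ?_
      have hpoly : pderiv i (p * X i) + C (v i) * (p * X i)
          = (pderiv i p + C (v i) * p) * X i + p := by
        rw [pderiv_mul, pderiv_X_self]
        ring
      rw [hpoly, Function.update_eq_self]
      have hν : ((x i : ℝ) : ℂ) ≠ 0 := Complex.ofReal_ne_zero.mpr (hx i).ne'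
      simp only [logFun, map_add, eval_mul, eval_X, aux_prod_sub_e x hx v i]
      push_cast
      field_simp
    · simp only [Function.update_of_ne hne] at hfe
      have key := hp.mul_const ((Real.log (x i) : ℝ) : ℂ)
      rw [hfe]
      refine key.congr_deriv ?_
      have hpoly : pderiv ν (p * X i) + C (v ν) * (p * X i)
          = (pderiv ν p + C (v ν) * p) * X i := by
        rw [pderiv_mul, pderiv_X_of_ne hne]
        ring
      rw [hpoly]
      simp only [logFun, eval_mul, eval_X]
      ring

lemma aux_pd_logFun {n : ℕ} (ν : Fin n) (r : MvPolynomial (Fin n) ℂ) (v : Fin n → ℂ)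
    (x : Fin n → ℝ) (hx : ∀ μ, 0 < x μ) :
    pd ν (logFun r v) x
      = logFun (pderiv ν r + C (v ν) * r) (fun μ => v μ - if μ = ν then 1 else 0) x :=
  (aux_hasDerivAt_logFun ν r v x hx).deriv

open Filter in
lemma aux_pd_congr {n : ℕ} (f g : (Fin n → ℝ) → ℂ) (ν : Fin n)
    (h : ∀ y, (∀ μ, 0 < y μ) → f y = g y) (x : Fin n → ℝ) (hx : ∀ μ, 0 < x μ) :
    pd ν f x = pd ν g x := by
  unfold pd
  apply Filter.EventuallyEq.deriv_eq
  filter_upwards [Ioi_mem_nhds (hx ν)] with t ht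
  exact h _ (aux_update_pos hx ν ht)

lemma aux_pd_iter_congr {n : ℕ} (f g : (Fin n → ℝ) → ℂ) (ν : Fin n) (k : ℕ)
    (h : ∀ y, (∀ μ, 0 < y μ) → f y = g y) :
    ∀ x, (∀ μ, 0 < x μ) → (pd ν)^[k] f x = (pd ν)^[k] g x := by
  induction k generalizing f g with
  | zero => exact h
  | succ k ih =>
    intro x hx
    rw [Function.iterate_succ_apply', Function.iterate_succ_apply']
    exact aux_pd_congr _ _ ν (ih _ _ h) x hx

lemma aux_iter_pd_logFun {n : ℕ} (ν : Fin n) (r : MvPolynomial (Fin n) ℂ) (v : Fin n → ℂ)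
    (k : ℕ) :
    ∀ x, (∀ μ, 0 < x μ) →
      (pd ν)^[k] (logFun r v) x
        = logFun (opIter ν (v ν) k r) (fun μ => v μ - if μ = ν then (k : ℂ) else 0) x := by
  induction k with
  | zero =>
    intro x hx
    have hw : (fun μ => v μ - if μ = ν then ((0 : ℕ) : ℂ) else 0) = v := by
      funext μ; split_ifs <;> simp
    rw [Function.iterate_zero_apply, hw]
    rfl
  | succ k ih =>
    intro x hx
    rw [Function.iterate_succ_apply',
      aux_pd_congr _ _ ν (fun y hy => ih y hy) x hx,
      aux_pd_logFun _ _ _ _ hx]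
    have hq : (pderiv ν (opIter ν (v ν) k r)
        + C ((fun μ => v μ - if μ = ν then (k : ℂ) else 0) ν) * opIter ν (v ν) k r)
        = opIter ν (v ν) (k + 1) r := by
      simp only [if_pos rfl]
      rfl
    have hw : (fun μ => (fun μ => v μ - if μ = ν then (k : ℂ) else 0) μ
          - if μ = ν then 1 else 0)
        = fun μ => v μ - if μ = ν then ((k + 1 : ℕ) : ℂ) else 0 := by
      funext μ
      split_ifs with h <;> push_cast <;> simp [h] <;> ring
    rw [hq, hw]

lemma aux_foldr_pd {n : ℕ} (kk : Fin n → ℕ) (r : MvPolynomial (Fin n) ℂ) (v : Fin n → ℂ) :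
    ∀ l : List (Fin n), l.Nodup → ∀ x, (∀ μ, 0 < x μ) →
      (l.foldr (fun ν g => (pd ν)^[kk ν] g) (logFun r v)) x
        = logFun (l.foldr (fun ν s => opIter ν (v ν) (kk ν) s) r)
            (fun μ => v μ - if μ ∈ l then (kk μ : ℂ) else 0) x := by
  intro l
  induction l with
  | nil =>
    intro _ x hx
    have hw : (fun μ => v μ - if μ ∈ ([] : List (Fin n)) then (kk μ : ℂ) else 0) = v := by
      funext μ; simp
    rw [List.foldr_nil, List.foldr_nil, hw]
  | cons ν tl ih =>
    intro hnd x hx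
    rcases List.nodup_cons.mp hnd with ⟨hνtl, hndtl⟩
    rw [List.foldr_cons, List.foldr_cons,
      aux_pd_iter_congr _ _ ν (kk ν) (fun y hy => ih hndtl y hy) x hx,
      aux_iter_pd_logFun ν _ _ (kk ν) x hx]
    have h1 : opIter ν ((fun μ => v μ - if μ ∈ tl then (kk μ : ℂ) else 0) ν) (kk ν)
        (tl.foldr (fun ρ s => opIter ρ (v ρ) (kk ρ) s) r)
        = opIter ν (v ν) (kk ν) (tl.foldr (fun ρ s => opIter ρ (v ρ) (kk ρ) s) r) := by
      simp [hνtl]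
    have h2 : (fun μ => (fun μ => v μ - if μ ∈ tl then (kk μ : ℂ) else 0) μ
          - if μ = ν then ((kk ν : ℂ)) else 0)
        = fun μ => v μ - if μ ∈ ν :: tl then (kk μ : ℂ) else 0 := by
      funext μ
      by_cases hμ : μ = ν
      · subst hμ; simp [hνtl]
      · simp [hμ, List.mem_cons]
    rw [h1, h2]

lemma aux_foldr_opIter {n : ℕ} (v : Fin n → ℂ) (kk : Fin n → ℕ) (r : MvPolynomial (Fin n) ℂ) :
    ∀ l : List (Fin n),
      l.foldr (fun ν s => opIter ν (v ν) (kk ν) s) r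
        = opPoly ((l.map fun ν =>
            ∏ μ ∈ Finset.range (kk ν), (X ν + C (v ν - μ))).prod) r := by
  intro l
  induction l with
  | nil => rw [List.map_nil, List.prod_nil, List.foldr_nil, opPoly_one]
  | cons ν tl ih =>
    rw [List.foldr_cons, ih, List.map_cons, List.prod_cons, opPoly_mul, opIter_eq]

/-- ∂_x^{u₋} • (r(log x)·x^v) = (p_{v'←v} • r)(log x)·x^{v−u₋}, where
v' = v − u and u₋ is the negative part of u ∈ ℤⁿ. -/
theorem stmt18 (n : ℕ) (v v' : Fin n → ℂ) (u : Fin n → ℤ)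
    (hv' : ∀ ν, v' ν = v ν - (u ν : ℂ)) (r : MvPolynomial (Fin n) ℂ)
    (x : Fin n → ℝ) (hx : ∀ ν, 0 < x ν) :
    pdIter (fun ν => (u ν).toNat) (logFun r v) x =
      logFun (opPoly (pOp v u) r) (fun ν => v ν - ((u ν).toNat : ℂ)) x := by
  have h := aux_foldr_pd (fun ν => (u ν).toNat) r v (List.finRange n)
    (List.nodup_finRange n) x hx
  have hexp : (fun μ => v μ - if μ ∈ List.finRange n
        then (((fun ν => (u ν).toNat) μ : ℕ) : ℂ) else 0)
      = fun ν => v ν - ((u ν).toNat : ℂ) := by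
    funext μ
    simp [List.mem_finRange]
  have hpoly : (List.finRange n).foldr
        (fun ν s => opIter ν (v ν) ((fun ν => (u ν).toNat) ν) s) r
      = opPoly (pOp v u) r := by
    rw [aux_foldr_opIter, pOp, Fin.prod_univ_def]
  rw [pdIter, h, hexp, hpoly]
end
end
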